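/- arXiv:1012.2943 — 4 statements merged into one kernel-verified Lean document; each statement's English description precedes it below -/
import Mathlib

section
/- Let f₁, f₂ be rational functions of the form P(x)/Q(x) with deg P < deg Q, whose poles all lie in the open lower half-plane, and sharing the same poles p₁,…,p_k. Then ∫_ℝ f₁(x) conj(f₂(x)) dx = -2πi · Λ(Π(f₁ conj(f₂))), where Λ(h) = lim_{x→∞} x h(x) for the rational function Π(f₁ conj(f₂)). -/
open MeasureTheory Complex Filter

lemma sub_ne (p : ℂ) (hp : p.im ≠ 0) (x : ℝ) : (x : ℂ) - p ≠ 0 := by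
  intro h
  apply hp
  have := congrArg Complex.im h
  simpa using this.symm

lemma norm_sub_ge_im (p : ℂ) (x : ℝ) : |p.im| ≤ ‖(x : ℂ) - p‖ := by
  have := Complex.abs_im_le_norm ((x : ℂ) - p)
  simpa using this

lemma tendsto_inv_sub (p : ℂ) : Tendsto (fun x : ℝ => ((x : ℂ) - p)⁻¹) atTop (nhds 0) := by
  apply tendsto_inv₀_cobounded.comp
  rw [← tendsto_norm_atTop_iff_cobounded]
  apply tendsto_atTop_mono (fun x : ℝ => ?_) (tendsto_atTop_add_const_right _ (-‖p‖) tendsto_id)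
  have h1 : x + -‖p‖ ≤ ‖(x : ℂ)‖ - ‖p‖ := by
    simp [Complex.norm_real]
    exact le_abs_self x
  refine h1.trans ?_
  exact norm_sub_norm_le _ _

lemma tendsto_inv_neg_sub (p : ℂ) : Tendsto (fun R : ℝ => ((-R : ℝ) - p : ℂ)⁻¹) atTop (nhds 0) := by
  apply tendsto_inv₀_cobounded.comp
  rw [← tendsto_norm_atTop_iff_cobounded]
  apply tendsto_atTop_mono (fun x : ℝ => ?_) (tendsto_atTop_add_const_right _ (-‖p‖) tendsto_id)
  have h1 : x + -‖p‖ ≤ ‖((-x : ℝ) : ℂ)‖ - ‖p‖ := by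
    simp [Complex.norm_real]
    exact le_abs_self x |>.trans (abs_neg x ▸ le_refl _)
  refine h1.trans ?_
  exact norm_sub_norm_le _ _

lemma tendsto_x_div (p : ℂ) (hp : p.im ≠ 0) :
    Tendsto (fun x : ℝ => (x : ℂ) / ((x : ℂ) - p)) atTop (nhds 1) := by
  have h0 : Tendsto (fun x : ℝ => ((x : ℂ))⁻¹) atTop (nhds 0) := by
    simpa using tendsto_inv_sub 0
  have h1 : Tendsto (fun x : ℝ => 1 - p * ((x : ℂ))⁻¹) atTop (nhds 1) := by
    have := (tendsto_const_nhds (x := p) (f := atTop (α := ℝ))).mul h0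
    simpa using (tendsto_const_nhds (x := (1:ℂ)) (f := atTop (α := ℝ))).sub this
  have h2 : Tendsto (fun x : ℝ => (1 - p * ((x : ℂ))⁻¹)⁻¹) atTop (nhds 1) := by
    simpa using h1.inv₀ one_ne_zero
  apply h2.congr'
  filter_upwards [eventually_gt_atTop 0] with x hx
  have hx0 : (x : ℂ) ≠ 0 := by exact_mod_cast hx.ne'
  field_simp [sub_ne p hp x]

lemma tendsto_term_x (p : ℂ) (hp : p.im ≠ 0) (c : ℂ) (l : ℕ) :
    Tendsto (fun x : ℝ => (x : ℂ) * (c / ((x : ℂ) - p) ^ (l + 1))) atTop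
      (nhds (if l = 0 then c else 0)) := by
  have key : Tendsto (fun x : ℝ => c * ((x : ℂ) / ((x : ℂ) - p)) * (((x : ℂ) - p)⁻¹) ^ l)
      atTop (nhds (c * 1 * 0 ^ l)) := by
    exact ((tendsto_const_nhds.mul (tendsto_x_div p hp)).mul ((tendsto_inv_sub p).pow l))
  have heq : ∀ x : ℝ, c * ((x : ℂ) / ((x : ℂ) - p)) * (((x : ℂ) - p)⁻¹) ^ l
      = (x : ℂ) * (c / ((x : ℂ) - p) ^ (l + 1)) := by
    intro x
    have h := sub_ne p hp x
    field_simp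
    ring_nf
    rw [inv_pow, inv_mul_cancel_right₀ (pow_ne_zero _ h), inv_mul_cancel_right₀ (pow_ne_zero _ h)]
  rw [funext heq] at key
  rcases Nat.eq_zero_or_pos l with rfl | hl
  · simpa using key
  · simpa [zero_pow hl.ne', if_neg hl.ne'] using key

lemma tendsto_x_mul_sum {k : ℕ} (q : Fin k → ℂ) (hq : ∀ j, (q j).im ≠ 0)
    (n : Fin k → ℕ) (d : (j : Fin k) → Fin (n j) → ℂ) (g : ℝ → ℂ)
    (hg : ∀ x : ℝ, g x = ∑ j, ∑ l, d j l / ((x : ℂ) - q j) ^ ((l : ℕ) + 1)) :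
    Tendsto (fun x : ℝ => (x : ℂ) * g x) atTop
      (nhds (∑ j, ∑ l : Fin (n j), if (l : ℕ) = 0 then d j l else 0)) := by
  have heq : ∀ x : ℝ, (x : ℂ) * g x
      = ∑ j, ∑ l : Fin (n j), (x : ℂ) * (d j l / ((x : ℂ) - q j) ^ ((l : ℕ) + 1)) := by
    intro x
    rw [hg x, Finset.mul_sum]
    exact Finset.sum_congr rfl fun j _ => Finset.mul_sum _ _ _
  rw [funext heq]
  exact tendsto_finset_sum _ fun j _ => tendsto_finset_sum _ fun l _ =>
    tendsto_term_x (q j) (hq j) (d j l) l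

lemma tendsto_sum_zero {k : ℕ} (q : Fin k → ℂ) (hq : ∀ j, (q j).im ≠ 0)
    (n : Fin k → ℕ) (d : (j : Fin k) → Fin (n j) → ℂ) (g : ℝ → ℂ)
    (hg : ∀ x : ℝ, g x = ∑ j, ∑ l, d j l / ((x : ℂ) - q j) ^ ((l : ℕ) + 1)) :
    Tendsto g atTop (nhds 0) := by
  rw [funext hg]
  have : (0 : ℂ) = ∑ j : Fin k, ∑ l : Fin (n j), (0 : ℂ) := by simp
  rw [this]
  refine tendsto_finset_sum _ fun j _ => tendsto_finset_sum _ fun l _ => ?_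
  have key : Tendsto (fun x : ℝ => d j l * (((x : ℂ) - q j)⁻¹) ^ ((l : ℕ) + 1)) atTop
      (nhds (d j l * 0 ^ ((l : ℕ) + 1))) :=
    tendsto_const_nhds.mul ((tendsto_inv_sub (q j)).pow _)
  have heq : ∀ x : ℝ, d j l * (((x : ℂ) - q j)⁻¹) ^ ((l : ℕ) + 1)
      = d j l / ((x : ℂ) - q j) ^ ((l : ℕ) + 1) := by
    intro x; rw [inv_pow, div_eq_mul_inv]
  rw [funext heq] at key
  simpa using key

lemma sqrt_bound (p : ℂ) (hp : p.im ≠ 0) :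
    ∃ C : ℝ, 0 < C ∧ ∀ x : ℝ, Real.sqrt (1 + x ^ 2) ≤ C * ‖(x : ℂ) - p‖ := by
  set r := p.re
  set i := p.im
  have hi2 : 0 < i ^ 2 := by positivity
  set A : ℝ := 2 * (1 + 2 * r ^ 2) * (1 + 1 / i ^ 2) with hA
  have hApos : 0 < A := by positivity
  refine ⟨Real.sqrt A, Real.sqrt_pos.mpr hApos, fun x => ?_⟩
  have hnorm : ‖(x : ℂ) - p‖ = Real.sqrt ((x - r) ^ 2 + i ^ 2) := by
    rw [Complex.norm_def, Complex.normSq_apply]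
    simp only [Complex.sub_re, Complex.sub_im, Complex.ofReal_re, Complex.ofReal_im]
    ring_nf
    rfl
  rw [hnorm, ← Real.sqrt_mul hApos.le]
  apply Real.sqrt_le_sqrt
  have hui : (1 / i ^ 2) * i ^ 2 = 1 := by field_simp
  have hu : 0 ≤ 1 / i ^ 2 := by positivity
  nlinarith [sq_nonneg (x - 2 * r), sq_nonneg ((x - r) * r), sq_nonneg (x - r), sq_nonneg r,
    mul_nonneg hu (sq_nonneg (x - r))]

lemma integrable_term (p q : ℂ) (hp : p.im ≠ 0) (hq : q.im ≠ 0) (a b : ℕ) (c : ℂ) :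
    Integrable (fun x : ℝ => c / (((x : ℂ) - p) ^ (a + 1) * ((x : ℂ) - q) ^ (b + 1))) := by
  obtain ⟨Cp, hCp, hCp'⟩ := sqrt_bound p hp
  obtain ⟨Cq, hCq, hCq'⟩ := sqrt_bound q hq
  have hipa : 0 < |p.im| ^ a := by positivity
  have hiqb : 0 < |q.im| ^ b := by positivity
  set K : ℝ := ‖c‖ * Cp * Cq / (|p.im| ^ a * |q.im| ^ b) with hK
  have hKnn : 0 ≤ K := by positivity
  have hcont : Continuous fun x : ℝ => c / (((x : ℂ) - p) ^ (a + 1) * ((x : ℂ) - q) ^ (b + 1)) := by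
    apply continuous_const.div
    · exact (((Complex.continuous_ofReal.sub continuous_const).pow _).mul
        ((Complex.continuous_ofReal.sub continuous_const).pow _))
    · exact fun x => mul_ne_zero (pow_ne_zero _ (sub_ne p hp x)) (pow_ne_zero _ (sub_ne q hq x))
  apply Integrable.mono' (integrable_inv_one_add_sq.const_mul K)
    hcont.aestronglyMeasurable
  refine Filter.Eventually.of_forall fun x => ?_
  have hnp : 0 < ‖(x : ℂ) - p‖ := norm_pos_iff.mpr (sub_ne p hp x)
  have hnq : 0 < ‖(x : ℂ) - q‖ := norm_pos_iff.mpr (sub_ne q hq x)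
  have h1x : (0:ℝ) < 1 + x ^ 2 := by positivity
  have hnormf : ‖c / (((x : ℂ) - p) ^ (a + 1) * ((x : ℂ) - q) ^ (b + 1))‖
      = ‖c‖ / (‖(x : ℂ) - p‖ ^ (a + 1) * ‖(x : ℂ) - q‖ ^ (b + 1)) := by
    rw [norm_div, norm_mul, norm_pow, norm_pow]
  rw [hnormf]
  have hstep : |p.im| ^ a * |q.im| ^ b * (1 + x ^ 2)
      ≤ Cp * Cq * (‖(x : ℂ) - p‖ ^ (a + 1) * ‖(x : ℂ) - q‖ ^ (b + 1)) := by
    nth_rewrite 1 [← Real.mul_self_sqrt h1x.le]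
    calc |p.im| ^ a * |q.im| ^ b * (Real.sqrt (1 + x ^ 2) * Real.sqrt (1 + x ^ 2))
        ≤ ‖(x : ℂ) - p‖ ^ a * ‖(x : ℂ) - q‖ ^ b * ((Cp * ‖(x : ℂ) - p‖) * (Cq * ‖(x : ℂ) - q‖)) := by
          gcongr
          · exact norm_sub_ge_im p x
          · exact norm_sub_ge_im q x
          · exact hCp' x
          · exact hCq' x
      _ = Cp * Cq * (‖(x : ℂ) - p‖ ^ (a + 1) * ‖(x : ℂ) - q‖ ^ (b + 1)) := by ring
  have hd : K * (1 + x ^ 2)⁻¹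
      = (‖c‖ * Cp * Cq) / (|p.im| ^ a * |q.im| ^ b * (1 + x ^ 2)) := by
    rw [hK]; field_simp
  rw [hd, div_le_div_iff₀ (by positivity) (by positivity)]
  have h5 := mul_le_mul_of_nonneg_left hstep (norm_nonneg c)
  ring_nf at h5 ⊢
  linarith [h5]

lemma neg_sub_ne (p : ℂ) (hp : p.im ≠ 0) (R : ℝ) : -(R : ℂ) - p ≠ 0 := by
  intro h
  apply hp
  have := congrArg Complex.im h
  simpa using this.symm

lemma hasDerivAt_sub_p (p : ℂ) (x : ℝ) : HasDerivAt (fun y : ℝ => (y : ℂ) - p) 1 x := by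
  simpa using (HasDerivAt.ofReal_comp (hasDerivAt_id x)).sub_const p

lemma cont_inv_pow (p : ℂ) (hp : p.im ≠ 0) (n : ℕ) :
    Continuous fun x : ℝ => (((x : ℂ) - p) ^ n)⁻¹ :=
  ((Complex.continuous_ofReal.sub continuous_const).pow n).inv₀
    fun x => pow_ne_zero _ (sub_ne p hp x)

lemma pole_integral_inv (p : ℂ) (hp : p.im ≠ 0) (R : ℝ) :
    ∫ x in (-R)..R, ((x : ℂ) - p)⁻¹
      = Complex.log ((R : ℂ) - p) - Complex.log (-(R : ℂ) - p) := by
  have h := intervalIntegral.integral_eq_sub_of_hasDerivAt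
    (f := fun x : ℝ => Complex.log ((x : ℂ) - p))
    (f' := fun x : ℝ => ((x : ℂ) - p)⁻¹) (a := -R) (b := R)
    (fun x _ => by
      have h1 := (hasDerivAt_sub_p p x).clog_real (by
        rw [Complex.mem_slitPlane_iff]
        right
        simpa using hp)
      simpa [one_div] using h1)
    (by
      have := cont_inv_pow p hp 1
      simpa using this.intervalIntegrable (-R) R)
  rw [h]
  push_cast
  ring_nf

lemma tendsto_integral_pow (p : ℂ) (hp : p.im ≠ 0) (l : ℕ) :
    Tendsto (fun R : ℝ => ∫ x in (-R)..R, (((x : ℂ) - p) ^ (l + 2))⁻¹) atTop (nhds 0) := by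
  have hl : (-(l : ℂ) - 1) ≠ 0 := by
    intro h
    have := congrArg Complex.re h
    simp at this
    linarith [this]
  have key : ∀ R : ℝ, ∫ x in (-R)..R, (((x : ℂ) - p) ^ (l + 2))⁻¹
      = (-(l : ℂ) - 1)⁻¹ * ((((R : ℂ) - p)⁻¹) ^ (l + 1) - ((-(R : ℂ) - p)⁻¹) ^ (l + 1)) := by
    intro R
    have h := intervalIntegral.integral_eq_sub_of_hasDerivAt
      (f := fun x : ℝ => (-(l : ℂ) - 1)⁻¹ * ((x : ℂ) - p) ^ (-(l : ℤ) - 2 + 1))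
      (f' := fun x : ℝ => (((x : ℂ) - p) ^ (l + 2))⁻¹) (a := -R) (b := R)
      (fun x _ => by
        have hz : (x : ℂ) - p ≠ 0 := sub_ne p hp x
        have h1 := hasDerivAt_zpow (-(l : ℤ) - 2 + 1) ((x : ℂ) - p) (Or.inl hz)
        have h2 := (h1.comp x (hasDerivAt_sub_p p x)).const_mul ((-(l : ℂ) - 1)⁻¹)
        have h3 : (-(l : ℂ) - 1)⁻¹ * ((↑(-(l : ℤ) - 2 + 1) : ℂ) * ((x : ℂ) - p) ^ (-(l : ℤ) - 2 + 1 - 1) * 1)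
            = (((x : ℂ) - p) ^ (l + 2))⁻¹ := by
          have : ((x : ℂ) - p) ^ (-(l : ℤ) - 2 + 1 - 1) = (((x : ℂ) - p) ^ (l + 2))⁻¹ := by
            rw [show (-(l : ℤ) - 2 + 1 - 1) = -((l : ℤ) + 2) by ring, zpow_neg]
            norm_cast
          rw [this]
          push_cast
          rw [show (-(l : ℂ) - 2 + 1) = (-(l : ℂ) - 1) by ring, mul_one, ← mul_assoc,
            inv_mul_cancel₀ hl, one_mul]
        rw [h3] at h2
        exact h2)
      ((cont_inv_pow p hp (l + 2)).intervalIntegrable (-R) R)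
    rw [h]
    have he : ∀ y : ℝ, ((y : ℂ) - p) ^ (-(l : ℤ) - 2 + 1) = (((y : ℂ) - p)⁻¹) ^ (l + 1) := by
      intro y
      rw [show (-(l : ℤ) - 2 + 1) = -((l : ℤ) + 1) by ring, zpow_neg, inv_pow]
      norm_cast
    beta_reduce
    rw [he R]
    have he2 : ((((-R : ℝ)) : ℂ) - p) ^ (-(l : ℤ) - 2 + 1) = ((-(R : ℂ) - p)⁻¹) ^ (l + 1) := by
      push_cast
      rw [show (-(l : ℤ) - 2 + 1) = -((l : ℤ) + 1) by ring, zpow_neg, inv_pow]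
      norm_cast
    rw [he2]
    ring
  rw [funext key]
  have h1 : Tendsto (fun R : ℝ => (((R : ℂ) - p)⁻¹) ^ (l + 1)) atTop (nhds 0) := by
    simpa using (tendsto_inv_sub p).pow (l + 1)
  have h2 : Tendsto (fun R : ℝ => ((-(R : ℂ) - p)⁻¹) ^ (l + 1)) atTop (nhds 0) := by
    have := (tendsto_inv_neg_sub p).pow (l + 1)
    simp only [Complex.ofReal_neg] at this
    simpa using this
  simpa using tendsto_const_nhds.mul (h1.sub h2)

lemma tendsto_norm_neg_sub_atTop (p : ℂ) : Tendsto (fun R : ℝ => ‖-(R : ℂ) - p‖) atTop atTop := by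
  apply tendsto_atTop_mono (fun x : ℝ => ?_) (tendsto_atTop_add_const_right _ (-‖p‖) tendsto_id)
  have h1 : x + -‖p‖ ≤ ‖-(x : ℂ)‖ - ‖p‖ := by
    simp [Complex.norm_real]
    exact (le_abs_self x).trans (abs_neg x ▸ le_refl _)
  exact h1.trans (norm_sub_norm_le _ _)

lemma tendsto_quot (p : ℂ) (hp : p.im ≠ 0) :
    Tendsto (fun R : ℝ => ((R : ℂ) - p) / (-(R : ℂ) - p)) atTop (nhds (-1)) := by
  have h0 : Tendsto (fun x : ℝ => ((x : ℂ))⁻¹) atTop (nhds 0) := by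
    simpa using tendsto_inv_sub 0
  have hnum : Tendsto (fun x : ℝ => 1 - p * ((x : ℂ))⁻¹) atTop (nhds 1) := by
    have := (tendsto_const_nhds (x := p) (f := atTop (α := ℝ))).mul h0
    simpa using (tendsto_const_nhds (x := (1:ℂ)) (f := atTop (α := ℝ))).sub this
  have hden : Tendsto (fun x : ℝ => -1 - p * ((x : ℂ))⁻¹) atTop (nhds (-1)) := by
    have := (tendsto_const_nhds (x := p) (f := atTop (α := ℝ))).mul h0
    simpa using (tendsto_const_nhds (x := (-1:ℂ)) (f := atTop (α := ℝ))).sub this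
  have h := hnum.div hden (by norm_num)
  have : (1 : ℂ) / (-1) = -1 := by norm_num
  rw [this] at h
  apply h.congr'
  filter_upwards [eventually_gt_atTop 0] with x hx
  have hx0 : (x : ℂ) ≠ 0 := by exact_mod_cast hx.ne'
  show (1 - p * ((x : ℂ))⁻¹) / (-1 - p * ((x : ℂ))⁻¹) = ((x : ℂ) - p) / (-(x : ℂ) - p)
  have hden0 : (-1 - p * ((x : ℂ))⁻¹) ≠ 0 := by
    have heq : -1 - p * ((x : ℂ))⁻¹ = (-(x : ℂ) - p) * ((x : ℂ))⁻¹ := by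
      field_simp
    rw [heq]
    exact mul_ne_zero (neg_sub_ne p hp x) (inv_ne_zero hx0)
  rw [div_eq_div_iff hden0 (neg_sub_ne p hp x)]
  field_simp

lemma tendsto_logabs_diff (p : ℂ) (hp : p.im ≠ 0) :
    Tendsto (fun R : ℝ => Real.log (‖(R : ℂ) - p‖)
      - Real.log (‖-(R : ℂ) - p‖)) atTop (nhds 0) := by
  have habs : Tendsto (fun R : ℝ => ‖(R : ℂ) - p‖ / ‖-(R : ℂ) - p‖)
      atTop (nhds 1) := by
    have := (continuous_norm.tendsto (-1)).comp (tendsto_quot p hp)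
    simpa [Function.comp_def, norm_div] using this
  have hlog : Tendsto
      (fun R : ℝ => Real.log (‖(R : ℂ) - p‖ / ‖-(R : ℂ) - p‖))
      atTop (nhds 0) := by
    have := (Real.continuousAt_log one_ne_zero).tendsto.comp habs
    simpa [Function.comp_def] using this
  apply hlog.congr
  intro R
  rw [Real.log_div ((norm_ne_zero_iff.mpr (sub_ne p hp R)))
    ((norm_ne_zero_iff.mpr (neg_sub_ne p hp R)))]

lemma tendsto_arg_right (p : ℂ) (hp : p.im ≠ 0) :
    Tendsto (fun R : ℝ => Complex.arg ((R : ℂ) - p)) atTop (nhds 0) := by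
  have h0 : Tendsto (fun x : ℝ => ((x : ℂ))⁻¹) atTop (nhds 0) := by
    simpa using tendsto_inv_sub 0
  have h1 : Tendsto (fun x : ℝ => 1 - p * ((x : ℂ))⁻¹) atTop (nhds 1) := by
    have := (tendsto_const_nhds (x := p) (f := atTop (α := ℝ))).mul h0
    simpa using (tendsto_const_nhds (x := (1:ℂ)) (f := atTop (α := ℝ))).sub this
  have harg : Tendsto (fun x : ℝ => Complex.arg (1 - p * ((x : ℂ))⁻¹)) atTop (nhds 0) := by
    have hc := Complex.continuousAt_arg (x := 1) (by rw [Complex.mem_slitPlane_iff]; left; norm_num)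
    have := hc.tendsto.comp h1
    simpa [Function.comp_def] using this
  apply harg.congr'
  filter_upwards [eventually_gt_atTop 0] with x hx
  have hx0 : (x : ℂ) ≠ 0 := by exact_mod_cast hx.ne'
  have heq : (x : ℂ) - p = (x : ℝ) * (1 - p * ((x : ℂ))⁻¹) := by
    push_cast
    field_simp
  rw [heq, Complex.arg_real_mul _ hx]

lemma tendsto_arg_left_neg (p : ℂ) (hp : p.im < 0) :
    Tendsto (fun R : ℝ => Complex.arg (-(R : ℂ) - p)) atTop (nhds Real.pi) := by
  have habs : Tendsto (fun R : ℝ => ‖-(R : ℂ) - p‖) atTop atTop := by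
    simpa using tendsto_norm_neg_sub_atTop p
  have hq : Tendsto (fun R : ℝ => Real.arcsin (p.im / ‖-(R : ℂ) - p‖) + Real.pi)
      atTop (nhds Real.pi) := by
    have hd : Tendsto (fun R : ℝ => p.im / ‖-(R : ℂ) - p‖) atTop (nhds 0) :=
      tendsto_const_nhds.div_atTop habs
    have := (Real.continuous_arcsin.tendsto 0).comp hd
    simpa [Function.comp_def] using this.add_const Real.pi
  apply hq.congr'
  filter_upwards [eventually_gt_atTop (-p.re)] with R hR
  rw [Complex.arg_of_re_neg_of_im_nonneg]
  · congr 2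
    simp
  · simp only [Complex.sub_re, Complex.neg_re, Complex.ofReal_re]
    linarith
  · simp only [Complex.sub_im, Complex.neg_im, Complex.ofReal_im]
    linarith [hp]

lemma tendsto_arg_left_pos (p : ℂ) (hp : 0 < p.im) :
    Tendsto (fun R : ℝ => Complex.arg (-(R : ℂ) - p)) atTop (nhds (-Real.pi)) := by
  have habs : Tendsto (fun R : ℝ => ‖-(R : ℂ) - p‖) atTop atTop := by
    simpa using tendsto_norm_neg_sub_atTop p
  have hq : Tendsto (fun R : ℝ => Real.arcsin (p.im / ‖-(R : ℂ) - p‖) - Real.pi)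
      atTop (nhds (-Real.pi)) := by
    have hd : Tendsto (fun R : ℝ => p.im / ‖-(R : ℂ) - p‖) atTop (nhds 0) :=
      tendsto_const_nhds.div_atTop habs
    have := (Real.continuous_arcsin.tendsto 0).comp hd
    have h2 := this.sub_const Real.pi
    simpa [Function.comp_def] using h2
  apply hq.congr'
  filter_upwards [eventually_gt_atTop (-p.re)] with R hR
  rw [Complex.arg_of_re_neg_of_im_neg]
  · congr 2
    simp
  · simp only [Complex.sub_re, Complex.neg_re, Complex.ofReal_re]
    linarith
  · simp only [Complex.sub_im, Complex.neg_im, Complex.ofReal_im]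
    linarith [hp]

lemma tendsto_log_diff (p : ℂ) (hp : p.im ≠ 0) (A : ℝ)
    (hA : Tendsto (fun R : ℝ => Complex.arg (-(R : ℂ) - p)) atTop (nhds A)) :
    Tendsto (fun R : ℝ => Complex.log ((R : ℂ) - p) - Complex.log (-(R : ℂ) - p)) atTop
      (nhds (-(A : ℂ) * Complex.I)) := by
  have h1 := tendsto_logabs_diff p hp
  have h2 := (tendsto_arg_right p hp).sub hA
  have hre := (Complex.continuous_ofReal.tendsto 0).comp h1
  have him := ((Complex.continuous_ofReal.tendsto (0 - A)).comp h2).mul_const Complex.I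
  have := hre.add him
  have heq : ∀ R : ℝ, ((Real.log (‖(R : ℂ) - p‖)
        - Real.log (‖-(R : ℂ) - p‖) : ℝ) : ℂ)
      + ((Complex.arg ((R : ℂ) - p) - Complex.arg (-(R : ℂ) - p) : ℝ) : ℂ) * Complex.I
      = Complex.log ((R : ℂ) - p) - Complex.log (-(R : ℂ) - p) := by
    intro R
    rw [Complex.log, Complex.log]
    push_cast
    ring
  have h3 := this.congr heq
  simpa using h3

lemma cont_term (p : ℂ) (hp : p.im ≠ 0) (c : ℂ) (n : ℕ) :
    Continuous fun x : ℝ => c / ((x : ℂ) - p) ^ n :=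
  continuous_const.div ((Complex.continuous_ofReal.sub continuous_const).pow n)
    fun x => pow_ne_zero _ (sub_ne p hp x)

lemma tendsto_integral_term (p : ℂ) (hp : p.im ≠ 0) (A : ℝ)
    (hA : Tendsto (fun R : ℝ => Complex.arg (-(R : ℂ) - p)) atTop (nhds A)) (c : ℂ) (l : ℕ) :
    Tendsto (fun R : ℝ => ∫ x in (-R)..R, c / ((x : ℂ) - p) ^ (l + 1)) atTop
      (nhds (if l = 0 then c * (-(A : ℂ) * Complex.I) else 0)) := by
  have hre : ∀ R : ℝ, ∫ x in (-R)..R, c / ((x : ℂ) - p) ^ (l + 1)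
      = c * ∫ x in (-R)..R, (((x : ℂ) - p) ^ (l + 1))⁻¹ := by
    intro R
    rw [← intervalIntegral.integral_const_mul]
    apply intervalIntegral.integral_congr
    intro x _
    simp [div_eq_mul_inv]
  rw [funext hre]
  rcases Nat.eq_zero_or_pos l with rfl | hl
  · have key : Tendsto (fun R : ℝ => ∫ x in (-R)..R, (((x : ℂ) - p) ^ (0 + 1))⁻¹) atTop
        (nhds (-(A : ℂ) * Complex.I)) := by
      have heq : ∀ R : ℝ, ∫ x in (-R)..R, (((x : ℂ) - p) ^ (0 + 1))⁻¹
          = Complex.log ((R : ℂ) - p) - Complex.log (-(R : ℂ) - p) := by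
        intro R
        rw [← pole_integral_inv p hp R]
        apply intervalIntegral.integral_congr
        intro x _
        simp
      rw [funext heq]
      exact tendsto_log_diff p hp A hA
    simpa using tendsto_const_nhds.mul key
  · obtain ⟨l', rfl⟩ : ∃ l', l = l' + 1 := ⟨l - 1, (Nat.succ_pred_eq_of_pos hl).symm⟩
    have key := tendsto_integral_pow p hp l'
    have := tendsto_const_nhds (x := c) (f := atTop (α := ℝ)) |>.mul key
    simpa using this


/-- **Integral formula via the Szegő projection of a product of rational functions.**
Let `f₁, f₂` be rational functions vanishing at infinity, all of whose poles `p_j`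
lie in the open lower half-plane (with multiplicities `m_j`), written in partial
fractions.  Split the product `f₁ · conj f₂` into its lower-half-plane part `gpos`
(which is exactly `Π(f₁ conj f₂)`) and its upper-half-plane part `gneg`.  If
`Λ(gpos) = lim_{x→∞} x·gpos(x) = L`, then `∫ f₁ conj f₂ = -2πi·L`. -/
theorem stmt_7 (k : ℕ) (p : Fin k → ℂ) (hp : ∀ j, (p j).im < 0) (m : Fin k → ℕ)
    (c₁ c₂ : (j : Fin k) → Fin (m j) → ℂ)
    (b b' : (j : Fin k) → Fin (2 * m j) → ℂ)
    (f₁ f₂ gpos gneg : ℝ → ℂ) (L : ℂ)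
    (hf₁ : ∀ x : ℝ, f₁ x = ∑ j, ∑ l, c₁ j l / ((x : ℂ) - p j) ^ ((l : ℕ) + 1))
    (hf₂ : ∀ x : ℝ, f₂ x = ∑ j, ∑ l, c₂ j l / ((x : ℂ) - p j) ^ ((l : ℕ) + 1))
    (hgpos : ∀ x : ℝ, gpos x = ∑ j, ∑ l, b j l / ((x : ℂ) - p j) ^ ((l : ℕ) + 1))
    (hgneg : ∀ x : ℝ, gneg x = ∑ j, ∑ l, b' j l / ((x : ℂ) - (starRingEnd ℂ) (p j)) ^ ((l : ℕ) + 1))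
    (hsplit : ∀ x : ℝ, f₁ x * (starRingEnd ℂ) (f₂ x) = gpos x + gneg x)
    (hΛ : Tendsto (fun x : ℝ => (x : ℂ) * gpos x) atTop (nhds L)) :
    ∫ x : ℝ, f₁ x * (starRingEnd ℂ) (f₂ x) = -2 * (Real.pi : ℂ) * Complex.I * L := by
  set q : Fin k → ℂ := fun j => (starRingEnd ℂ) (p j) with hqdef
  have hpne : ∀ j, (p j).im ≠ 0 := fun j => (hp j).ne
  have hqpos : ∀ j, 0 < (q j).im := fun j => by
    simp [hqdef, Complex.conj_im]
    exact hp j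
  have hqne : ∀ j, (q j).im ≠ 0 := fun j => (hqpos j).ne'
  set Sb : ℂ := ∑ j, ∑ l : Fin (2 * m j), if (l : ℕ) = 0 then b j l else 0 with hSbdef
  set Sb' : ℂ := ∑ j, ∑ l : Fin (2 * m j), if (l : ℕ) = 0 then b' j l else 0 with hSbdef'
  -- L = Sb
  have hLSb : L = Sb :=
    tendsto_nhds_unique hΛ (tendsto_x_mul_sum p hpne _ b gpos hgpos)
  -- x * (f₁ x * conj (f₂ x)) → 0
  have hxf : Tendsto (fun x : ℝ => (x : ℂ) * (f₁ x * (starRingEnd ℂ) (f₂ x))) atTop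
      (nhds 0) := by
    have h1 := tendsto_x_mul_sum p hpne _ c₁ f₁ hf₁
    have h2 : Tendsto (fun x : ℝ => (starRingEnd ℂ) (f₂ x)) atTop (nhds 0) := by
      have h0 := tendsto_sum_zero p hpne _ c₂ f₂ hf₂
      have := (Complex.continuous_conj.tendsto 0).comp h0
      simpa [Function.comp_def] using this
    have := h1.mul h2
    rw [mul_zero] at this
    apply this.congr
    intro x
    ring
  -- Sb' = -L
  have hSb'L : Sb' = -L := by
    have h1 : Tendsto (fun x : ℝ => (x : ℂ) * gneg x) atTop (nhds (-L)) := by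
      have heq : ∀ x : ℝ, (x : ℂ) * gneg x
          = (x : ℂ) * (f₁ x * (starRingEnd ℂ) (f₂ x)) - (x : ℂ) * gpos x := by
        intro x
        rw [hsplit x]
        ring
      rw [funext heq]
      have := hxf.sub hΛ
      simpa using this
    exact tendsto_nhds_unique (tendsto_x_mul_sum q hqne _ b' gneg hgneg) h1
  -- Integrability
  have hint : Integrable (fun x : ℝ => f₁ x * (starRingEnd ℂ) (f₂ x)) := by
    have hconj : ∀ x : ℝ, (starRingEnd ℂ) (f₂ x)
        = ∑ j, ∑ l, (starRingEnd ℂ) (c₂ j l) / ((x : ℂ) - q j) ^ ((l : ℕ) + 1) := by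
      intro x
      rw [hf₂ x, map_sum]
      refine Finset.sum_congr rfl fun j _ => ?_
      rw [map_sum]
      refine Finset.sum_congr rfl fun l _ => ?_
      rw [map_div₀, map_pow, map_sub, Complex.conj_ofReal]
    have hprod : ∀ x : ℝ, f₁ x * (starRingEnd ℂ) (f₂ x)
        = ∑ j, ∑ j', ∑ l : Fin (m j), ∑ l' : Fin (m j'),
            (c₁ j l * (starRingEnd ℂ) (c₂ j' l')) /
              (((x : ℂ) - p j) ^ ((l : ℕ) + 1) * ((x : ℂ) - q j') ^ ((l' : ℕ) + 1)) := by
      intro x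
      rw [hf₁ x, hconj x, Finset.sum_mul_sum]
      refine Finset.sum_congr rfl fun j _ => Finset.sum_congr rfl fun j' _ => ?_
      rw [Finset.sum_mul_sum]
      refine Finset.sum_congr rfl fun l _ => Finset.sum_congr rfl fun l' _ => ?_
      rw [div_mul_div_comm]
    have hbig : Integrable (fun x : ℝ => ∑ j, ∑ j', ∑ l : Fin (m j), ∑ l' : Fin (m j'),
        (c₁ j l * (starRingEnd ℂ) (c₂ j' l')) /
          (((x : ℂ) - p j) ^ ((l : ℕ) + 1) * ((x : ℂ) - q j') ^ ((l' : ℕ) + 1))) := by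
      apply integrable_finset_sum
      intro j _
      apply integrable_finset_sum
      intro j' _
      apply integrable_finset_sum
      intro l _
      apply integrable_finset_sum
      intro l' _
      exact integrable_term (p j) (q j') (hpne j) (hqne j') (l : ℕ) (l' : ℕ) _
    exact hbig.congr (Filter.Eventually.of_forall fun x => (hprod x).symm)
  -- Interval integral identity
  have hIR : ∀ R : ℝ, ∫ x in (-R)..R, f₁ x * (starRingEnd ℂ) (f₂ x)
      = (∑ j, ∑ l : Fin (2 * m j), ∫ x in (-R)..R, b j l / ((x : ℂ) - p j) ^ ((l : ℕ) + 1))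
      + (∑ j, ∑ l : Fin (2 * m j), ∫ x in (-R)..R, b' j l / ((x : ℂ) - q j) ^ ((l : ℕ) + 1)) := by
    intro R
    have h1 : ∀ x ∈ Set.uIcc (-R) R, f₁ x * (starRingEnd ℂ) (f₂ x)
        = (∑ j, ∑ l : Fin (2 * m j), b j l / ((x : ℂ) - p j) ^ ((l : ℕ) + 1))
        + (∑ j, ∑ l : Fin (2 * m j), b' j l / ((x : ℂ) - q j) ^ ((l : ℕ) + 1)) := by
      intro x _
      rw [hsplit x, hgpos x, hgneg x]
    rw [intervalIntegral.integral_congr h1]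
    rw [intervalIntegral.integral_add, intervalIntegral.integral_finset_sum,
      intervalIntegral.integral_finset_sum]
    · refine congrArg₂ _ (Finset.sum_congr rfl fun j _ => ?_) (Finset.sum_congr rfl fun j _ => ?_)
      · exact intervalIntegral.integral_finset_sum fun l _ =>
          (cont_term (p j) (hpne j) (b j l) _).intervalIntegrable _ _
      · exact intervalIntegral.integral_finset_sum fun l _ =>
          (cont_term (q j) (hqne j) (b' j l) _).intervalIntegrable _ _
    · exact fun j _ => ((continuous_finset_sum _ fun l _ =>
        cont_term (q j) (hqne j) (b' j l) _)).intervalIntegrable _ _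
    · exact fun j _ => ((continuous_finset_sum _ fun l _ =>
        cont_term (p j) (hpne j) (b j l) _)).intervalIntegrable _ _
    · exact (continuous_finset_sum _ fun j _ => continuous_finset_sum _ fun l _ =>
        cont_term (p j) (hpne j) (b j l) _).intervalIntegrable _ _
    · exact (continuous_finset_sum _ fun j _ => continuous_finset_sum _ fun l _ =>
        cont_term (q j) (hqne j) (b' j l) _).intervalIntegrable _ _
  -- limits of each sum of interval integrals
  have T2 : Tendsto (fun R : ℝ => ∫ x in (-R)..R, f₁ x * (starRingEnd ℂ) (f₂ x)) atTop
      (nhds (-2 * (Real.pi : ℂ) * Complex.I * L)) := by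
    rw [funext hIR]
    have hTb : Tendsto (fun R : ℝ =>
        ∑ j, ∑ l : Fin (2 * m j), ∫ x in (-R)..R, b j l / ((x : ℂ) - p j) ^ ((l : ℕ) + 1))
        atTop (nhds (∑ j, ∑ l : Fin (2 * m j),
          if (l : ℕ) = 0 then b j l * (-(Real.pi : ℂ) * Complex.I) else 0)) :=
      tendsto_finset_sum _ fun j _ => tendsto_finset_sum _ fun l _ =>
        tendsto_integral_term (p j) (hpne j) Real.pi (tendsto_arg_left_neg (p j) (hp j))
          (b j l) (l : ℕ)
    have hTb' : Tendsto (fun R : ℝ =>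
        ∑ j, ∑ l : Fin (2 * m j), ∫ x in (-R)..R, b' j l / ((x : ℂ) - q j) ^ ((l : ℕ) + 1))
        atTop (nhds (∑ j, ∑ l : Fin (2 * m j),
          if (l : ℕ) = 0 then b' j l * (-((-Real.pi : ℝ) : ℂ) * Complex.I) else 0)) :=
      tendsto_finset_sum _ fun j _ => tendsto_finset_sum _ fun l _ =>
        tendsto_integral_term (q j) (hqne j) (-Real.pi) (tendsto_arg_left_pos (q j) (hqpos j))
          (b' j l) (l : ℕ)
    have hsum1 : (∑ j, ∑ l : Fin (2 * m j),
        if (l : ℕ) = 0 then b j l * (-(Real.pi : ℂ) * Complex.I) else 0)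
        = Sb * (-(Real.pi : ℂ) * Complex.I) := by
      rw [hSbdef, Finset.sum_mul]
      refine Finset.sum_congr rfl fun j _ => ?_
      rw [Finset.sum_mul]
      refine Finset.sum_congr rfl fun l _ => ?_
      split <;> simp
    have hsum2 : (∑ j, ∑ l : Fin (2 * m j),
        if (l : ℕ) = 0 then b' j l * (-((-Real.pi : ℝ) : ℂ) * Complex.I) else 0)
        = Sb' * ((Real.pi : ℂ) * Complex.I) := by
      rw [hSbdef', Finset.sum_mul]
      refine Finset.sum_congr rfl fun j _ => ?_
      rw [Finset.sum_mul]
      refine Finset.sum_congr rfl fun l _ => ?_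
      split
      · push_cast
        ring
      · simp
    have := hTb.add hTb'
    rw [hsum1, hsum2] at this
    have hfinal : Sb * (-(Real.pi : ℂ) * Complex.I) + Sb' * ((Real.pi : ℂ) * Complex.I)
        = -2 * (Real.pi : ℂ) * Complex.I * L := by
      rw [← hLSb, hSb'L]
      ring
    rw [hfinal] at this
    exact this
  have T1 : Tendsto (fun R : ℝ => ∫ x in (-R)..R, f₁ x * (starRingEnd ℂ) (f₂ x)) atTop
      (nhds (∫ x : ℝ, f₁ x * (starRingEnd ℂ) (f₂ x))) :=
    intervalIntegral_tendsto_integral hint tendsto_neg_atTop_atBot tendsto_id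
  exact tendsto_nhds_unique T1 T2
end

section
/- Let f ∈ L²₊(ℝ) (holomorphic in the upper half-plane) with f(conj(p)) = 0 for some p with Im(p) < 0 (i.e., conj(p) is in the upper half-plane). Then there exists f' ∈ L²₊(ℝ) such that f(x) = ((x - conj(p))/(x - p)) f'(x) and ‖f'‖_{L²} = ‖f‖_{L²}. -/
open MeasureTheory Complex Filter

/-- An element of the Hardy space `L²₊(ℝ)` of the upper half-plane: an `L²` boundary
function together with a holomorphic extension to `ℂ₊` with uniformly `L²`-bounded
horizontal traces, of which the boundary function is the a.e. vertical limit. -/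
structure HardyL2 where
  toFun : ℝ → ℂ
  ext : ℂ → ℂ
  holo : DifferentiableOn ℂ ext {z : ℂ | 0 < z.im}
  bound : ∃ M : ℝ, ∀ y : ℝ, 0 < y → (∫ x : ℝ, ‖ext (x + y * Complex.I)‖ ^ 2) ≤ M
  boundary : ∀ᵐ x : ℝ, Tendsto (fun y : ℝ => ext (x + y * Complex.I))
    (nhdsWithin 0 (Set.Ioi 0)) (nhds (toFun x))
  memL2 : MeasureTheory.MemLp toFun 2

lemma aux_im (x y : ℝ) : ((x : ℂ) + y * Complex.I).im = y := by simp

lemma aux_normSq_le (p z : ℂ) (hp : p.im < 0) (hz : 0 ≤ z.im) :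
    ‖z - (starRingEnd ℂ) p‖ ≤ ‖z - p‖ := by
  have h1 : Complex.normSq (z - (starRingEnd ℂ) p) ≤ Complex.normSq (z - p) := by
    simp only [Complex.normSq_apply, Complex.sub_re, Complex.sub_im, Complex.conj_re,
      Complex.conj_im]
    nlinarith [mul_nonneg hz (neg_nonneg.2 hp.le)]
  rw [Complex.norm_def, Complex.norm_def]
  exact Real.sqrt_le_sqrt h1

lemma aux_qp (p : ℂ) : ‖(starRingEnd ℂ) p - p‖ = 2 * |p.im| := by
  have h : (starRingEnd ℂ) p - p = ((-2 * p.im : ℝ) : ℂ) * Complex.I := by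
    apply Complex.ext <;> simp <;> ring
  rw [h, norm_mul, Complex.norm_I, Complex.norm_real, mul_one, Real.norm_eq_abs]
  rw [abs_mul]
  norm_num

/-- **Division of a Hardy function by a Blaschke factor.**  If `f ∈ L²₊(ℝ)` and its
holomorphic extension vanishes at the interior point `conj p ∈ ℂ₊` (`Im p < 0`), then
`f(x) = ((x - conj p)/(x - p)) f'(x)` for some `f' ∈ L²₊(ℝ)` with the same `L²` norm. -/
theorem stmt_10 (p : ℂ) (hp : p.im < 0) (f : HardyL2)
    (h0 : f.ext ((starRingEnd ℂ) p) = 0) :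
    ∃ f' : HardyL2,
      (∀ᵐ x : ℝ, f.toFun x = (((x : ℂ) - (starRingEnd ℂ) p) / ((x : ℂ) - p)) * f'.toFun x) ∧
      eLpNorm f'.toFun 2 volume = eLpNorm f.toFun 2 volume := by
  classical
  set q : ℂ := (starRingEnd ℂ) p with hqdef
  have hqim : q.im = -p.im := Complex.conj_im p
  have hqre : q.re = p.re := Complex.conj_re p
  set b : ℝ := -p.im with hbdef
  have hb : 0 < b := by simp [hbdef]; linarith
  have hqU : 0 < q.im := by rw [hqim]; exact hb
  have hU : IsOpen {z : ℂ | 0 < z.im} := by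
    exact isOpen_lt continuous_const Complex.continuous_im
  have hmemU : {z : ℂ | 0 < z.im} ∈ nhds q := hU.mem_nhds hqU
  have hds : DifferentiableOn ℂ (dslope f.ext q) {z : ℂ | 0 < z.im} :=
    (Complex.differentiableOn_dslope hmemU).2 f.holo
  set E : ℂ → ℂ := fun z => dslope f.ext q z * (z - p) with hEdef
  have hE_holo : DifferentiableOn ℂ E {z : ℂ | 0 < z.im} :=
    hds.mul (differentiableOn_id.sub (differentiableOn_const p))
  -- formula for E away from q
  have hEne : ∀ z : ℂ, z ≠ q → E z = f.ext z * ((z - p) / (z - q)) := by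
    intro z hz
    have hzq : z - q ≠ 0 := sub_ne_zero.2 hz
    simp only [hEdef, dslope_of_ne _ hz, slope_def_field, h0, sub_zero]
    field_simp
  have hqp : ‖q - p‖ = 2 * b := by
    rw [hqdef, aux_qp, abs_of_neg hp]
  -- lower bound  ‖f.ext z‖ ≤ ‖E z‖  on the upper half-plane
  have hlow : ∀ z : ℂ, 0 < z.im → ‖f.ext z‖ ≤ ‖E z‖ := by
    intro z hz
    rcases eq_or_ne z q with rfl | hne
    · simp [h0]
    · rw [hEne z hne, norm_mul, norm_div]
      have h1 : ‖z - q‖ ≤ ‖z - p‖ := aux_normSq_le p z hp hz.le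
      have h2 : (0:ℝ) < ‖z - q‖ := by
        simpa [norm_pos_iff, sub_ne_zero] using hne
      exact le_mul_of_one_le_right (norm_nonneg _) ((one_le_div h2).2 h1)
  -- outside the ball around q
  have hout : ∀ z : ℂ, b / 2 ≤ ‖z - q‖ → ‖E z‖ ≤ 5 * ‖f.ext z‖ := by
    intro z hz
    have hne : z ≠ q := by
      intro h; rw [h] at hz; simp at hz; linarith
    rw [hEne z hne, norm_mul, norm_div]
    have h2 : (0:ℝ) < ‖z - q‖ := lt_of_lt_of_le (by linarith) hz
    have h3 : ‖z - p‖ ≤ ‖z - q‖ + 2 * b := by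
      calc ‖z - p‖ = ‖(z - q) + (q - p)‖ := by ring_nf
        _ ≤ ‖z - q‖ + ‖q - p‖ := norm_add_le _ _
        _ = ‖z - q‖ + 2 * b := by rw [hqp]
    have h4 : ‖z - p‖ ≤ 5 * ‖z - q‖ := by linarith
    have h5 : ‖z - p‖ / ‖z - q‖ ≤ 5 := by
      rw [div_le_iff₀ h2]; linarith
    nlinarith [norm_nonneg (f.ext z)]
  -- boundedness near q
  have hsubU : Metric.closedBall q (b / 2) ⊆ {z : ℂ | 0 < z.im} := by
    intro z hz
    rw [Metric.mem_closedBall, dist_eq_norm] at hz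
    have := Complex.abs_im_le_norm (z - q)
    rw [Complex.sub_im, hqim] at this
    simp only [Set.mem_setOf_eq]
    have h2 : |z.im - -p.im| ≤ b / 2 := le_trans this hz
    rw [abs_le] at h2
    have := h2.1
    simp only [hbdef] at *
    linarith
  obtain ⟨K, hK⟩ := (isCompact_closedBall q (b / 2)).exists_bound_of_continuousOn
    (f.holo.continuousOn.mono hsubU)
  have hK0 : 0 ≤ K :=
    le_trans (norm_nonneg _) (hK q (Metric.mem_closedBall_self (by linarith)))
  have hmaps : Set.MapsTo f.ext (Metric.ball q (b / 2)) (Metric.ball (f.ext q) (K + 1)) := by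
    intro z hz
    rw [Metric.mem_ball, dist_eq_norm, h0, sub_zero]
    exact lt_of_le_of_lt (hK z (Metric.ball_subset_closedBall hz)) (by linarith)
  have hdsl : ∀ z ∈ Metric.ball q (b / 2), ‖dslope f.ext q z‖ ≤ (K + 1) / (b / 2) :=
    fun z hz => Complex.norm_dslope_le_div_of_mapsTo_ball
      (f.holo.mono (Metric.ball_subset_closedBall.trans hsubU)) (hmaps.mono_right Metric.ball_subset_closedBall) hz
  have hin : ∀ z ∈ Metric.ball q (b / 2), ‖E z‖ ≤ 5 * (K + 1) := by
    intro z hz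
    have h1 : ‖z - q‖ < b / 2 := by
      rw [Metric.mem_ball, dist_eq_norm] at hz; exact hz
    have h3 : ‖z - p‖ ≤ ‖z - q‖ + 2 * b := by
      calc ‖z - p‖ = ‖(z - q) + (q - p)‖ := by ring_nf
        _ ≤ ‖z - q‖ + ‖q - p‖ := norm_add_le _ _
        _ = ‖z - q‖ + 2 * b := by rw [hqp]
    have h4 : ‖z - p‖ ≤ 5 * (b / 2) := by linarith
    have h5 : ‖E z‖ ≤ ((K + 1) / (b / 2)) * (5 * (b / 2)) := by
      rw [hEdef]
      simp only
      rw [norm_mul]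
      apply mul_le_mul (hdsl z hz) h4 (norm_nonneg _)
      positivity
    calc ‖E z‖ ≤ ((K + 1) / (b / 2)) * (5 * (b / 2)) := h5
      _ = 5 * (K + 1) := by field_simp
  -- the trace bound
  obtain ⟨M, hM⟩ := f.bound
  have hM0 : 0 ≤ M := by
    refine le_trans ?_ (hM 1 one_pos)
    exact integral_nonneg fun x => by positivity
  set M' : ℝ := 25 * M + (5 * (K + 1)) ^ 2 * b with hM'def
  have hM'0 : 0 ≤ M' := by positivity
  have hEcont : Continuous fun z : ℝ × ℝ => (0:ℝ) := continuous_const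
  have hbound : ∀ y : ℝ, 0 < y → (∫ x : ℝ, ‖E ((x:ℝ) + y * Complex.I)‖ ^ 2) ≤ M' := by
    intro y hy
    by_cases hI : Integrable (fun x : ℝ => ‖E ((x:ℝ) + y * Complex.I)‖ ^ 2) volume
    swap
    · rw [integral_undef hI]; exact hM'0
    have hline : Continuous fun x : ℝ => ((x:ℝ) : ℂ) + y * Complex.I :=
      (Complex.continuous_ofReal).add continuous_const
    have hlineU : ∀ x : ℝ, ((x:ℝ) : ℂ) + y * Complex.I ∈ {z : ℂ | 0 < z.im} := by
      intro x; simp only [Set.mem_setOf_eq, aux_im]; exact hy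
    have hfc : Continuous fun x : ℝ => ‖f.ext ((x:ℝ) + y * Complex.I)‖ ^ 2 :=
      ((f.holo.continuousOn.comp_continuous hline hlineU).norm).pow 2
    have hfI : Integrable (fun x : ℝ => ‖f.ext ((x:ℝ) + y * Complex.I)‖ ^ 2) volume := by
      refine hI.mono hfc.aestronglyMeasurable (ae_of_all _ fun x => ?_)
      have h1 := hlow _ (hlineU x)
      rw [Real.norm_eq_abs, Real.norm_eq_abs, _root_.abs_of_nonneg (by positivity),
        _root_.abs_of_nonneg (by positivity)]
      exact pow_le_pow_left₀ (norm_nonneg _) h1 2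
    have hfM : (∫ x : ℝ, ‖f.ext ((x:ℝ) + y * Complex.I)‖ ^ 2) ≤ M := hM y hy
    set s : Set ℝ := (fun x : ℝ => ((x:ℝ) : ℂ) + y * Complex.I) ⁻¹' Metric.ball q (b / 2)
      with hsdef
    have hsmeas : MeasurableSet s :=
      (Metric.isOpen_ball.preimage hline).measurableSet
    have hssub : s ⊆ Set.Ioo (q.re - b / 2) (q.re + b / 2) := by
      intro x hx
      rw [hsdef, Set.mem_preimage, Metric.mem_ball, dist_eq_norm] at hx
      have := Complex.abs_re_le_norm (((x:ℝ) : ℂ) + y * Complex.I - q)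
      have h2 : |x - q.re| < b / 2 := by
        have hre : (((x:ℝ) : ℂ) + y * Complex.I - q).re = x - q.re := by simp
        rw [hre] at this
        exact lt_of_le_of_lt this hx
      rw [abs_lt] at h2
      constructor <;> [linarith [h2.1]; linarith [h2.2]]
    have hvol : volume s ≤ ENNReal.ofReal b := by
      refine le_trans (measure_mono hssub) ?_
      rw [Real.volume_Ioo]
      apply ENNReal.ofReal_le_ofReal
      ring_nf
      linarith
    have hvolfin : volume s < ⊤ := lt_of_le_of_lt hvol ENNReal.ofReal_lt_top
    have hsplit :
        (∫ x : ℝ, ‖E ((x:ℝ) + y * Complex.I)‖ ^ 2) =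
          (∫ x in s, ‖E ((x:ℝ) + y * Complex.I)‖ ^ 2) +
          (∫ x in sᶜ, ‖E ((x:ℝ) + y * Complex.I)‖ ^ 2) :=
      (integral_add_compl hsmeas hI).symm
    have hin' : (∫ x in s, ‖E ((x:ℝ) + y * Complex.I)‖ ^ 2) ≤ (5 * (K + 1)) ^ 2 * b := by
      have h1 := norm_setIntegral_le_of_norm_le_const (μ := volume) (s := s) (f := fun x : ℝ => ‖E ((x:ℝ) + y * Complex.I)‖ ^ 2)
        (C := (5 * (K + 1)) ^ 2) hvolfin
        (fun x hx => by
          rw [Real.norm_eq_abs, _root_.abs_of_nonneg (by positivity)]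
          have := hin _ (by rwa [hsdef, Set.mem_preimage] at hx)
          exact pow_le_pow_left₀ (norm_nonneg _) this 2)
      rw [Real.norm_eq_abs] at h1
      refine le_trans (le_trans (le_abs_self _) h1) ?_
      exact mul_le_mul_of_nonneg_left (ENNReal.toReal_le_of_le_ofReal hb.le hvol)
        (by positivity)
    have hout' : (∫ x in sᶜ, ‖E ((x:ℝ) + y * Complex.I)‖ ^ 2) ≤ 25 * M := by
      have h1 : (∫ x in sᶜ, ‖E ((x:ℝ) + y * Complex.I)‖ ^ 2) ≤
          (∫ x in sᶜ, 25 * ‖f.ext ((x:ℝ) + y * Complex.I)‖ ^ 2) := by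
        refine setIntegral_mono_on hI.integrableOn ((hfI.const_mul 25).integrableOn)
          hsmeas.compl (fun x hx => ?_)
        have hx' : b / 2 ≤ ‖((x:ℝ) : ℂ) + y * Complex.I - q‖ := by
          rw [hsdef, Set.mem_compl_iff, Set.mem_preimage, Metric.mem_ball, dist_eq_norm,
            not_lt] at hx
          exact hx
        have := hout _ hx'
        nlinarith [norm_nonneg (f.ext (((x:ℝ) : ℂ) + y * Complex.I)),
          norm_nonneg (E (((x:ℝ) : ℂ) + y * Complex.I))]
      refine le_trans h1 ?_
      rw [integral_const_mul]
      have h2 : (∫ x in sᶜ, ‖f.ext ((x:ℝ) + y * Complex.I)‖ ^ 2) ≤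
          (∫ x : ℝ, ‖f.ext ((x:ℝ) + y * Complex.I)‖ ^ 2) :=
        setIntegral_le_integral hfI (ae_of_all _ fun x => by positivity)
      nlinarith
    rw [hsplit, hM'def]
    linarith
  -- the boundary function
  set g : ℝ → ℂ := fun x => (((x : ℂ) - p) / ((x : ℂ) - q)) * f.toFun x with hgdef
  have hxq : ∀ x : ℝ, (x : ℂ) - q ≠ 0 := by
    intro x h
    rw [sub_eq_zero] at h
    have := congrArg Complex.im h
    simp only [Complex.ofReal_im] at this
    rw [← this] at hqU; exact lt_irrefl _ hqU
  have hxp : ∀ x : ℝ, (x : ℂ) - p ≠ 0 := by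
    intro x h
    rw [sub_eq_zero] at h
    have := congrArg Complex.im h
    simp only [Complex.ofReal_im] at this
    rw [← this] at hp; exact lt_irrefl _ hp
  have hnormg : ∀ x : ℝ, ‖g x‖ = ‖f.toFun x‖ := by
    intro x
    have hconj : (x : ℂ) - q = (starRingEnd ℂ) ((x : ℂ) - p) := by
      rw [map_sub, Complex.conj_ofReal]
    rw [hgdef]
    simp only
    rw [norm_mul, norm_div, hconj, RCLike.norm_conj, div_self (norm_ne_zero_iff.mpr (hxp x)), one_mul]
  have hgmeas : AEStronglyMeasurable g volume := by
    refine AEStronglyMeasurable.mul ?_ f.memL2.1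
    refine Continuous.aestronglyMeasurable ?_
    exact (Complex.continuous_ofReal.sub continuous_const).div
      (Complex.continuous_ofReal.sub continuous_const) (fun x => hxq x)
  have hgnorm : eLpNorm g 2 volume = eLpNorm f.toFun 2 volume :=
    eLpNorm_congr_norm_ae (ae_of_all _ hnormg)
  have hgL2 : MemLp g 2 volume := ⟨hgmeas, by rw [hgnorm]; exact f.memL2.2⟩
  -- boundary convergence
  have hbd : ∀ᵐ x : ℝ, Tendsto (fun y : ℝ => E ((x:ℝ) + y * Complex.I))
      (nhdsWithin 0 (Set.Ioi 0)) (nhds (g x)) := by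
    filter_upwards [f.boundary] with x hx
    have hfac : Tendsto (fun y : ℝ => (((x:ℝ) + y * Complex.I - p) / ((x:ℝ) + y * Complex.I - q)))
        (nhdsWithin 0 (Set.Ioi 0)) (nhds (((x : ℂ) - p) / ((x : ℂ) - q))) := by
      have hz : Tendsto (fun y : ℝ => ((x:ℝ) : ℂ) + y * Complex.I)
          (nhdsWithin 0 (Set.Ioi 0)) (nhds ((x : ℂ))) := by
        have : Continuous fun y : ℝ => ((x:ℝ) : ℂ) + y * Complex.I :=
          continuous_const.add ((Complex.continuous_ofReal.mul continuous_const))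
        have h1 : Tendsto (fun y : ℝ => ((x:ℝ) : ℂ) + y * Complex.I)
            (nhds (0:ℝ)) (nhds (((x:ℝ) : ℂ) + ((0:ℝ) : ℂ) * Complex.I)) := this.tendsto 0
        have h2 := h1.mono_left (nhdsWithin_le_nhds (s := Set.Ioi (0:ℝ)))
        simpa using h2
      exact ((hz.sub_const p).div (hz.sub_const q) (hxq x))
    have hmul := hx.mul hfac
    have hEv : ∀ᶠ y : ℝ in nhdsWithin 0 (Set.Ioi 0),
        E ((x:ℝ) + y * Complex.I) =
          f.ext ((x:ℝ) + y * Complex.I) *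
            (((x:ℝ) + y * Complex.I - p) / ((x:ℝ) + y * Complex.I - q)) := by
      have hIoo : Set.Ioo (0:ℝ) b ∈ nhdsWithin 0 (Set.Ioi 0) :=
        Ioo_mem_nhdsGT_of_mem ⟨le_refl 0, hb⟩
      filter_upwards [hIoo] with y hy
      refine hEne _ (fun h => ?_)
      have := congrArg Complex.im h
      rw [aux_im, hqim] at this
      rw [this] at hy
      exact lt_irrefl _ hy.2
    refine Tendsto.congr' (hEv.mono fun y h => h.symm) ?_
    rw [hgdef]
    simpa [mul_comm] using hmul
  refine ⟨⟨g, E, hE_holo, ⟨M', hbound⟩, hbd, hgL2⟩, ?_, hgnorm⟩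
  refine ae_of_all _ fun x => ?_
  show f.toFun x = (((x : ℂ) - q) / ((x : ℂ) - p)) * ((((x : ℂ) - p) / ((x : ℂ) - q)) * f.toFun x)
  field_simp
  rw [eq_div_iff (mul_ne_zero (hxq x) (hxp x))]
  ring
end

section
/- Let u be a bounded holomorphic function on the upper half-plane with bounded continuous boundary values on ℝ such that x·u(x) is bounded on ℝ. Then z·u(z) is bounded on the closed upper half-plane; in particular u(i/ε) → 0 as ε → 0⁺. -/
open MeasureTheory Complex Filter

open Set Metric Topology

namespace Stmt11Aux

lemma kernel_integrable (a b : ℝ) (hb : b ≠ 0) :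
    Integrable fun x : ℝ => ((x - a) ^ 2 + b ^ 2)⁻¹ := by
  have hb2 : 0 < b ^ 2 := by positivity
  set C : ℝ := max 1 (b ^ 2)⁻¹ with hC
  have hC1 : 1 ≤ C := le_max_left _ _
  have hC2 : (b ^ 2)⁻¹ ≤ C := le_max_right _ _
  refine (integrable_inv_one_add_sq.comp_sub_right a |>.const_mul C).mono'
    ?_ (Eventually.of_forall fun x => ?_)
  · exact ((measurable_id.sub_const a).pow_const 2 |>.add_const (b ^ 2)).inv.aestronglyMeasurable
  · have h1 : 0 < (x - a) ^ 2 + b ^ 2 := by positivity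
    have h2 : 0 < 1 + (x - a) ^ 2 := by positivity
    have h3 : 1 + (x - a) ^ 2 ≤ C * ((x - a) ^ 2 + b ^ 2) := by
      have hcb : 1 ≤ C * b ^ 2 := by
        have := mul_le_mul_of_nonneg_right hC2 hb2.le
        rwa [inv_mul_cancel₀ (ne_of_gt hb2)] at this
      nlinarith [mul_le_mul_of_nonneg_right hC1 (sq_nonneg (x - a))]
    have h4 := mul_le_mul_of_nonneg_right h3 (le_of_lt (inv_pos.mpr h2))
    rw [mul_inv_cancel₀ (ne_of_gt h2)] at h4
    rw [Real.norm_eq_abs, abs_of_pos (by positivity)]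
    rw [inv_le_iff_one_le_mul₀ h1]
    exact le_of_le_of_eq h4 (by ring)

lemma kernel_integral (a b : ℝ) (hb : 0 < b) :
    ∫ x : ℝ, ((x - a) ^ 2 + b ^ 2)⁻¹ = Real.pi / b := by
  have h0 : (fun x : ℝ => ((x - a) ^ 2 + b ^ 2)⁻¹)
      = fun x : ℝ => (fun t : ℝ => (t ^ 2 + b ^ 2)⁻¹) (x - a) := rfl
  rw [h0, integral_sub_right_eq_self (fun t : ℝ => (t ^ 2 + b ^ 2)⁻¹) a]
  have h2 : (fun t : ℝ => (t ^ 2 + b ^ 2)⁻¹)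
      = fun t : ℝ => (b ^ 2)⁻¹ • ((fun s : ℝ => (1 + s ^ 2)⁻¹) (b⁻¹ * t)) := by
    funext t
    have hb' : b ≠ 0 := ne_of_gt hb
    simp only [smul_eq_mul]
    rw [← mul_inv]
    congr 1
    field_simp
    ring
  rw [h2, integral_smul, MeasureTheory.Measure.integral_comp_mul_left (fun s : ℝ => (1 + s ^ 2)⁻¹) b⁻¹,
    integral_univ_inv_one_add_sq]
  rw [inv_inv, abs_of_pos hb, smul_eq_mul, smul_eq_mul]
  field_simp

end Stmt11Aux

namespace Stmt11Aux

lemma abs_sq_eq (w : ℂ) (x : ℝ) :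
    (‖(x : ℂ) - w‖) ^ 2 = (x - w.re) ^ 2 + w.im ^ 2 := by
  rw [Complex.sq_norm, Complex.normSq_apply]
  simp [Complex.sub_re, Complex.sub_im]
  ring

lemma meas_aux {V : ℝ → ℂ} (hVc : Continuous V) (w : ℂ) :
    AEStronglyMeasurable (fun x : ℝ => V x / ((x : ℂ) - w)) volume := by
  simp only [div_eq_mul_inv]
  exact (hVc.measurable.mul ((Complex.measurable_ofReal.sub_const w).inv)).aestronglyMeasurable

lemma cauchy_integrable {V : ℝ → ℂ} (hVc : Continuous V) {C₁ C₂ : ℝ}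
    (hV : ∀ x : ℝ, ‖V x‖ ≤ C₁) (hxV : ∀ x : ℝ, |x| * ‖V x‖ ≤ C₂)
    {w : ℂ} (hw : w.im ≠ 0) :
    Integrable fun x : ℝ => V x / ((x : ℂ) - w) := by
  set A : ℝ := C₂ + C₁ * ‖w‖ with hA
  refine ((kernel_integrable w.re w.im hw).const_mul A).mono'
    (meas_aux hVc w) (Eventually.of_forall fun x => ?_)
  have hd0 : (x : ℂ) - w ≠ 0 := by
    intro h
    apply hw
    have := congrArg Complex.im h
    simpa using this.symm
  set d : ℝ := ‖(x : ℂ) - w‖ with hd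
  have hdpos : 0 < d := by
    rw [hd]; exact norm_pos_iff.mpr hd0
  have key : ‖V x‖ * d ≤ A := by
    have h1 : d ≤ |x| + ‖w‖ := by
      calc d ≤ ‖(x : ℂ)‖ + ‖w‖ := by
              rw [hd]; exact norm_sub_le _ _
        _ = |x| + ‖w‖ := by rw [Complex.norm_real, Real.norm_eq_abs]
    calc ‖V x‖ * d ≤ ‖V x‖ * (|x| + ‖w‖) :=
          mul_le_mul_of_nonneg_left h1 (norm_nonneg _)
      _ = |x| * ‖V x‖ + ‖V x‖ * ‖w‖ := by ring
      _ ≤ C₂ + C₁ * ‖w‖ := by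
          refine add_le_add (hxV x) ?_
          exact mul_le_mul_of_nonneg_right (hV x) (norm_nonneg _)
  have hnorm : ‖V x / ((x : ℂ) - w)‖ = ‖V x‖ / d := by
    simp [norm_div, hd]
  rw [hnorm, ← abs_sq_eq w x, ← hd]
  have h2 : ‖V x‖ ≤ A / d := (le_div_iff₀ hdpos).mpr key
  calc ‖V x‖ / d ≤ (A / d) / d := div_le_div_of_nonneg_right h2 hdpos.le
    _ = A * (d ^ 2)⁻¹ := by rw [div_div, ← pow_two, div_eq_mul_inv]

end Stmt11Aux

namespace Stmt11Aux

lemma cauchy_hasDerivAt {V : ℝ → ℂ} (hVc : Continuous V) {C₁ C₂ : ℝ}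
    (hV : ∀ x : ℝ, ‖V x‖ ≤ C₁) (hxV : ∀ x : ℝ, |x| * ‖V x‖ ≤ C₂)
    {w₀ : ℂ} (hw : w₀.im ≠ 0) :
    HasDerivAt (fun w : ℂ => ∫ x : ℝ, V x / ((x : ℂ) - w))
      (∫ x : ℝ, V x / ((x : ℂ) - w₀) ^ 2) w₀ := by
  have hC₁0 : 0 ≤ C₁ := le_trans (norm_nonneg _) (hV 0)
  set δ : ℝ := |w₀.im| / 2 with hδ
  have hδ0 : 0 < δ := by
    have : 0 < |w₀.im| := abs_pos.mpr hw
    positivity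
  -- key estimates for w in the ball
  have hball : ∀ w ∈ ball w₀ δ, ∀ x : ℝ,
      ((x : ℂ) - w ≠ 0) ∧ ‖(x : ℂ) - w₀‖ ≤ 2 * ‖(x : ℂ) - w‖ := by
    intro w hwball x
    have hdist : ‖w - w₀‖ < δ := by
      rw [mem_ball] at hwball
      simpa [Complex.dist_eq] using hwball
    have him : δ ≤ |w.im| := by
      have h1 : |w.im - w₀.im| ≤ ‖w - w₀‖ := by
        simpa using Complex.abs_im_le_norm (w - w₀)
      have h2 : |w₀.im| - |w.im| ≤ |w.im - w₀.im| := by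
        have := abs_sub_abs_le_abs_sub w₀.im w.im
        rwa [abs_sub_comm] at this
      have : |w₀.im| = 2 * δ := by rw [hδ]; ring
      linarith
    have habs : δ ≤ ‖(x : ℂ) - w‖ := by
      have h1 : |((x : ℂ) - w).im| ≤ ‖(x : ℂ) - w‖ := Complex.abs_im_le_norm _
      have h2 : ((x : ℂ) - w).im = -w.im := by simp
      rw [h2, abs_neg] at h1
      linarith
    constructor
    · intro h
      rw [h] at habs
      simp at habs
      linarith
    · calc ‖(x : ℂ) - w₀‖
          ≤ ‖(x : ℂ) - w‖ + ‖w - w₀‖ := by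
            simpa using norm_sub_le_norm_sub_add_norm_sub ((x : ℂ)) w w₀
        _ ≤ ‖(x : ℂ) - w‖ + δ := by linarith
        _ ≤ 2 * ‖(x : ℂ) - w‖ := by linarith
  have key := hasDerivAt_integral_of_dominated_loc_of_deriv_le (μ := volume)
      (F := fun (w : ℂ) (x : ℝ) => V x / ((x : ℂ) - w))
      (F' := fun (w : ℂ) (x : ℝ) => V x / ((x : ℂ) - w) ^ 2)
      (bound := fun x : ℝ => 4 * C₁ * ((x - w₀.re) ^ 2 + w₀.im ^ 2)⁻¹)
      (ball_mem_nhds w₀ hδ0) (Eventually.of_forall fun w => meas_aux hVc w)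
      (cauchy_integrable hVc hV hxV hw) ?_ ?_ ?_ ?_
  · exact key.2
  · -- measurability of F' w₀
    simp only [div_eq_mul_inv]
    exact (hVc.measurable.mul
      (((Complex.measurable_ofReal.sub_const w₀).pow_const 2).inv)).aestronglyMeasurable
  · -- bound
    refine Eventually.of_forall fun x => fun w hwball => ?_
    obtain ⟨hne, hle⟩ := hball w hwball x
    have hd : 0 < ‖(x : ℂ) - w‖ := norm_pos_iff.mpr hne
    have hd0 : 0 < ‖(x : ℂ) - w₀‖ := by
      apply norm_pos_iff.mpr
      intro h
      apply hw
      have := congrArg Complex.im h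
      simpa using this.symm
    have hnorm : ‖V x / ((x : ℂ) - w) ^ 2‖ = ‖V x‖ / ‖(x : ℂ) - w‖ ^ 2 := by
      simp [norm_div, map_pow]
    show ‖V x / ((x : ℂ) - w) ^ 2‖ ≤ 4 * C₁ * ((x - w₀.re) ^ 2 + w₀.im ^ 2)⁻¹
    rw [hnorm, ← abs_sq_eq w₀ x]
    rw [div_le_iff₀ (by positivity)]
    have h4 : ‖(x : ℂ) - w₀‖ ^ 2 ≤ 4 * ‖(x : ℂ) - w‖ ^ 2 := by
      nlinarith
    have h5 : (1 : ℝ) ≤ 4 * ‖(x : ℂ) - w‖ ^ 2 / ‖(x : ℂ) - w₀‖ ^ 2 :=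
      (one_le_div (by positivity)).mpr h4
    calc ‖V x‖ ≤ C₁ := hV x
      _ = C₁ * 1 := by ring
      _ ≤ C₁ * (4 * ‖(x : ℂ) - w‖ ^ 2 / ‖(x : ℂ) - w₀‖ ^ 2) :=
          mul_le_mul_of_nonneg_left h5 hC₁0
      _ = 4 * C₁ * (‖(x : ℂ) - w₀‖ ^ 2)⁻¹ * ‖(x : ℂ) - w‖ ^ 2 := by
          field_simp
  · exact ((kernel_integrable w₀.re w₀.im hw).const_mul (4 * C₁))
  · -- differentiability
    refine Eventually.of_forall fun x => fun w hwball => ?_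
    obtain ⟨hne, _⟩ := hball w hwball x
    have h1 : HasDerivAt (fun w : ℂ => (x : ℂ) - w) (-1) w := (hasDerivAt_id w).const_sub (x : ℂ)
    have h2 := h1.inv hne
    have h3 := h2.const_mul (V x)
    have heq : (fun w : ℂ => V x * ((x : ℂ) - w)⁻¹) = fun w : ℂ => V x / ((x : ℂ) - w) := by
      funext w; rw [div_eq_mul_inv]
    simp only [Pi.inv_apply] at h3
    rw [heq] at h3
    rw [show V x / ((x : ℂ) - w) ^ 2 = V x * (- -1 / ((x : ℂ) - w) ^ 2) by ring]
    exact h3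

end Stmt11Aux

namespace Stmt11Aux

lemma ker_id (u v A Ux : ℂ) (hu : u ≠ 0) (hv : v ≠ 0) (huv : u - v = 2 * A * Complex.I) :
    A * Ux / (u * v) = 1 / (2 * Complex.I) * (Ux / (-u) - Ux / (-v)) := by
  have h2 : (2 : ℂ) * Complex.I ≠ 0 := by simp [Complex.I_ne_zero]
  have h1 : Ux / (-u) - Ux / (-v) = Ux * (u - v) / (u * v) := by
    rw [div_sub_div _ _ (neg_ne_zero.mpr hu) (neg_ne_zero.mpr hv)]
    congr 1 <;> ring
  rw [h1, huv, div_mul_div_comm, one_mul]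
  rw [div_eq_div_iff (mul_ne_zero hu hv) (mul_ne_zero h2 (mul_ne_zero hu hv))]
  ring


end Stmt11Aux

open Stmt11Aux


/-- **Decay of a bounded holomorphic function with decaying boundary values.**
If `U` is holomorphic on the upper half-plane, continuous up to `ℝ`, given by the
Poisson integral of its bounded boundary values, and `x·U(x)` is bounded on `ℝ`, then
`z·U(z)` is bounded on the closed upper half-plane; in particular `U(i/ε) → 0` as
`ε → 0⁺`. -/
theorem stmt_11 (U : ℂ → ℂ)
    (hholo : DifferentiableOn ℂ U {z : ℂ | 0 < z.im})
    (hcont : ContinuousOn U {z : ℂ | 0 ≤ z.im})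
    (hb : ∃ C : ℝ, ∀ x : ℝ, ‖U x‖ ≤ C)
    (hxb : ∃ C : ℝ, ∀ x : ℝ, ‖(x : ℂ) * U x‖ ≤ C)
    (hPoisson : ∀ z : ℂ, 0 < z.im →
      U z = (1 / (Real.pi : ℂ)) * ∫ x : ℝ, (z.im : ℂ) * U x / ((‖z - x‖ : ℝ) ^ 2 : ℝ)) :
    (∃ M : ℝ, ∀ z : ℂ, 0 ≤ z.im → ‖z * U z‖ ≤ M) ∧
    Tendsto (fun ε : ℝ => U (Complex.I / (ε : ℂ))) (nhdsWithin 0 (Set.Ioi 0)) (nhds 0) := by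
  obtain ⟨C₁, hC₁⟩ := hb
  obtain ⟨C₂, hC₂⟩ := hxb
  have hUc : Continuous fun x : ℝ => U x :=
    hcont.comp_continuous Complex.continuous_ofReal (fun x => by simp)
  have hxU : ∀ x : ℝ, |x| * ‖U (x : ℂ)‖ ≤ C₂ := by
    intro x
    have := hC₂ x
    rwa [norm_mul, Complex.norm_real, Real.norm_eq_abs] at this
  set Vc : ℝ → ℂ := fun x => (starRingEnd ℂ) (U x) with hVc_def
  have hVcc : Continuous Vc := continuous_star.comp hUc
  have hVcb : ∀ x : ℝ, ‖Vc x‖ ≤ C₁ := fun x => by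
    simp only [hVc_def, RCLike.norm_conj]; exact hC₁ x
  have hxVc : ∀ x : ℝ, |x| * ‖Vc x‖ ≤ C₂ := fun x => by
    simp only [hVc_def, RCLike.norm_conj]; exact hxU x
  set s : Set ℂ := {z : ℂ | 0 < z.im} with hs_def
  have hs_open : IsOpen s := isOpen_lt continuous_const Complex.continuous_im
  set G : ℂ → ℂ := fun z => ∫ x : ℝ, U x / ((x : ℂ) - (starRingEnd ℂ) z) with hGdef
  set K : ℂ → ℂ := fun w => ∫ x : ℝ, Vc x / ((x : ℂ) - w) with hKdef
  set F : ℂ → ℂ := fun w => ∫ x : ℝ, U x / ((x : ℂ) - w) with hFdef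
  have hGK : ∀ z : ℂ, G z = (starRingEnd ℂ) (K z) := by
    intro z
    rw [hGdef, hKdef]
    simp only [← integral_conj]
    congr 1
    funext x
    rw [map_div₀]
    simp [hVc_def, Complex.conj_ofReal]
  -- the Poisson-Cauchy relation on s
  have hUFG : ∀ z ∈ s, U z = 1 / (2 * (Real.pi : ℂ) * Complex.I) * (F z - G z) := by
    intro z hz
    have hy : 0 < z.im := hz
    have hint1 : Integrable fun x : ℝ => U x / ((x : ℂ) - z) :=
      cauchy_integrable hUc hC₁ hxU (ne_of_gt hy)
    have hint2 : Integrable fun x : ℝ => U x / ((x : ℂ) - (starRingEnd ℂ) z) :=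
      cauchy_integrable hUc hC₁ hxU (by simp [Complex.conj_im]; linarith)
    have hpt : ∀ x : ℝ, ((z.im : ℂ) * U x / ((‖z - (x : ℂ)‖ : ℝ) ^ 2 : ℝ))
        = 1 / (2 * Complex.I) * (U x / ((x : ℂ) - z) - U x / ((x : ℂ) - (starRingEnd ℂ) z)) := by
      intro x
      have hQ : ((‖z - (x : ℂ)‖ ^ 2 : ℝ) : ℂ)
          = (z - x) * ((starRingEnd ℂ) z - x) := by
        rw [Complex.sq_norm, ← Complex.mul_conj]
        congr 1
        rw [map_sub, Complex.conj_ofReal]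
      have hu : z - (x : ℂ) ≠ 0 := by
        intro h
        have := congrArg Complex.im h
        simp at this
        linarith
      have hv : (starRingEnd ℂ) z - (x : ℂ) ≠ 0 := by
        intro h
        have := congrArg Complex.im h
        simp at this
        linarith
      have huv : (z - (x : ℂ)) - ((starRingEnd ℂ) z - (x : ℂ)) = 2 * (z.im : ℂ) * Complex.I := by
        rw [sub_sub_sub_cancel_right]
        have := Complex.sub_conj z
        rw [this]
        push_cast
        ring
      have hx1 : (x : ℂ) - z = -(z - x) := by ring
      have hx2 : (x : ℂ) - (starRingEnd ℂ) z = -((starRingEnd ℂ) z - x) := by ring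
      rw [hQ, hx1, hx2]
      exact ker_id _ _ _ _ hu hv huv
    calc U z = 1 / (Real.pi : ℂ) *
          ∫ x : ℝ, (z.im : ℂ) * U x / ((‖z - (x : ℂ)‖ : ℝ) ^ 2 : ℝ) := hPoisson z hz
      _ = 1 / (Real.pi : ℂ) * ∫ x : ℝ,
            1 / (2 * Complex.I) * (U x / ((x : ℂ) - z) - U x / ((x : ℂ) - (starRingEnd ℂ) z)) := by
          congr 1
          exact integral_congr_ae (Eventually.of_forall fun x => hpt x)
      _ = 1 / (Real.pi : ℂ) * (1 / (2 * Complex.I) *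
            ((∫ x : ℝ, U x / ((x : ℂ) - z)) - ∫ x : ℝ, U x / ((x : ℂ) - (starRingEnd ℂ) z))) := by
          rw [MeasureTheory.integral_const_mul, integral_sub hint1 hint2]
      _ = 1 / (2 * (Real.pi : ℂ) * Complex.I) * (F z - G z) := by
          simp only [hFdef, hGdef]
          ring
  -- G is differentiable on s
  have hGdiff : ∀ z ∈ s, DifferentiableAt ℂ G z := by
    intro z hz
    have heq : (fun w => F w - 2 * (Real.pi : ℂ) * Complex.I * U w) =ᶠ[𝓝 z] G := by
      filter_upwards [hs_open.mem_nhds hz] with w hw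
      have h := hUFG w hw
      have hI : (2 * (Real.pi : ℂ) * Complex.I) ≠ 0 := by
        simp [Real.pi_ne_zero, Complex.I_ne_zero, Complex.ofReal_ne_zero]
      field_simp at h
      linear_combination -h
    have hFd : DifferentiableAt ℂ F z := by
      have := cauchy_hasDerivAt hUc hC₁ hxU (w₀ := z) (ne_of_gt (show (0:ℝ) < z.im from hz))
      rw [hFdef]
      exact this.differentiableAt
    have hUd : DifferentiableAt ℂ U z := hholo.differentiableAt (hs_open.mem_nhds hz)
    exact (heq.differentiableAt_iff).mp (hFd.sub ((differentiableAt_const _).mul hUd))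
  -- deriv of G vanishes
  have hGder0 : ∀ z ∈ s, HasDerivAt G 0 z := by
    intro z hz
    have hKd : HasDerivAt K (∫ x : ℝ, Vc x / ((x : ℂ) - z) ^ 2) z := by
      rw [hKdef]
      exact cauchy_hasDerivAt hVcc hVcb hxVc (ne_of_gt (show (0:ℝ) < z.im from hz))
    set kz : ℂ := ∫ x : ℝ, Vc x / ((x : ℂ) - z) ^ 2 with hkz
    have hGd : DifferentiableAt ℂ G z := hGdiff z hz
    have hGder : HasDerivAt G (deriv G z) z := hGd.hasDerivAt
    have hGfun : G = fun w => (starRingEnd ℂ) (K w) := funext hGK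
    have hA : HasFDerivAt G ((Complex.conjCLE.toContinuousLinearMap).comp
        ((ContinuousLinearMap.smulRight (1 : ℂ →L[ℂ] ℂ) kz).restrictScalars ℝ)) z := by
      rw [hGfun]
      exact (Complex.conjCLE.toContinuousLinearMap.hasFDerivAt).comp z
        (hKd.hasFDerivAt.restrictScalars ℝ)
    have hB : HasFDerivAt G
        ((ContinuousLinearMap.smulRight (1 : ℂ →L[ℂ] ℂ) (deriv G z)).restrictScalars ℝ) z :=
      hGder.hasFDerivAt.restrictScalars ℝ
    have heq := hA.unique hB
    have e1 : (starRingEnd ℂ) kz = deriv G z := by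
      have := congrArg (fun (L : ℂ →L[ℝ] ℂ) => L 1) heq
      simpa using this
    have eI : (starRingEnd ℂ) (Complex.I * kz) = Complex.I * deriv G z := by
      have := congrArg (fun (L : ℂ →L[ℝ] ℂ) => L Complex.I) heq
      simpa using this
    rw [map_mul, Complex.conj_I, e1] at eI
    have h4 : (2 * Complex.I) * deriv G z = 0 := by linear_combination -eI
    have h5 : deriv G z = 0 :=
      (mul_eq_zero.mp h4).resolve_left (by simp [Complex.I_ne_zero])
    rw [← h5]
    exact hGder
  -- G constant on s
  have hGconst : ∀ z ∈ s, ∀ w ∈ s, G z = G w := by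
    intro z hz w hw
    have hGdiffOn : DifferentiableOn ℂ G s := fun u hu => (hGdiff u hu).differentiableWithinAt
    have hfd : ∀ u ∈ s, fderivWithin ℂ G s u = 0 := by
      intro u hu
      rw [fderivWithin_of_isOpen hs_open hu, (hGder0 u hu).hasFDerivAt.fderiv]
      ext
      simp
    exact (convex_halfSpace_im_gt 0).is_const_of_fderivWithin_eq_zero hGdiffOn hfd hz hw
  -- G tends to 0 along the imaginary axis
  have htend : Tendsto (fun t : ℝ => G ((t : ℂ) * Complex.I)) atTop (𝓝 0) := by
    have hrw : ∀ t : ℝ, G ((t : ℂ) * Complex.I) = ∫ x : ℝ, U x / ((x : ℂ) + t * Complex.I) := by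
      intro t
      simp only [hGdef]
      congr 1
      funext x
      congr 1
      rw [map_mul, Complex.conj_I, Complex.conj_ofReal]
      ring
    simp only [hrw]
    have h0 : (0 : ℂ) = ∫ x : ℝ, (0 : ℂ) := by simp
    rw [h0]
    refine tendsto_integral_filter_of_dominated_convergence
      (fun x : ℝ => ‖U x / ((x : ℂ) - Complex.I)‖) ?_ ?_ ?_ ?_
    · refine Eventually.of_forall fun t => ?_
      simp only [div_eq_mul_inv]
      exact (hUc.measurable.mul
        ((Complex.measurable_ofReal.add_const ((t : ℂ) * Complex.I)).inv)).aestronglyMeasurable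
    · filter_upwards [eventually_ge_atTop 1] with t ht
      refine Eventually.of_forall fun x => ?_
      have h1 : ‖(x : ℂ) - Complex.I‖ ^ 2 = x ^ 2 + 1 := by
        rw [Complex.sq_norm, Complex.normSq_apply]
        simp
        ring
      have h2 : ‖(x : ℂ) + t * Complex.I‖ ^ 2 = x ^ 2 + t ^ 2 := by
        rw [Complex.sq_norm, Complex.normSq_apply]
        simp
        ring
      have h3 : ‖(x : ℂ) - Complex.I‖ ≤ ‖(x : ℂ) + t * Complex.I‖ := by
        have hsq : ‖(x : ℂ) - Complex.I‖ ^ 2 ≤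
            ‖(x : ℂ) + t * Complex.I‖ ^ 2 := by
          rw [h1, h2]
          nlinarith
        nlinarith [norm_nonneg ((x : ℂ) - Complex.I),
          norm_nonneg ((x : ℂ) + t * Complex.I)]
      have h4 : 0 < ‖(x : ℂ) - Complex.I‖ := by
        apply norm_pos_iff.mpr
        intro h
        have := congrArg Complex.im h
        simp at this
      rw [norm_div, norm_div]
      exact div_le_div_of_nonneg_left (norm_nonneg _) h4 h3
    · exact (cauchy_integrable hUc hC₁ hxU (w := Complex.I) (by simp)).norm
    · refine Eventually.of_forall fun x => ?_
      apply squeeze_zero_norm' (a := fun t : ℝ => ‖U (x : ℂ)‖ * t⁻¹)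
      · filter_upwards [eventually_gt_atTop 0] with t ht
        have h5 : (t : ℝ) ≤ ‖(x : ℂ) + t * Complex.I‖ := by
          have := Complex.abs_im_le_norm ((x : ℂ) + t * Complex.I)
          have him : ((x : ℂ) + t * Complex.I).im = t := by simp
          rw [him] at this
          calc (t : ℝ) ≤ |t| := le_abs_self t
            _ ≤ _ := this
        have h5' : t ≤ ‖(x : ℂ) + t * Complex.I‖ := h5
        calc ‖U (x : ℂ) / ((x : ℂ) + t * Complex.I)‖
            = ‖U (x : ℂ)‖ / ‖(x : ℂ) + t * Complex.I‖ := norm_div _ _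
          _ ≤ ‖U (x : ℂ)‖ / t := div_le_div_of_nonneg_left (norm_nonneg _) ht h5'
          _ = ‖U (x : ℂ)‖ * t⁻¹ := div_eq_mul_inv _ _
      · simpa using tendsto_inv_atTop_zero.const_mul ‖U (x : ℂ)‖
  -- G vanishes on s
  have hG0 : ∀ z ∈ s, G z = 0 := by
    intro z hz
    refine tendsto_nhds_unique ?_ htend
    refine Tendsto.congr' ?_ (tendsto_const_nhds : Tendsto _ _ (nhds (G z)))
    filter_upwards [eventually_gt_atTop 0] with t ht
    exact hGconst z hz ((t : ℂ) * Complex.I) (by simp [hs_def, ht])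
  -- main bound
  have hbound : ∀ z : ℂ, 0 ≤ z.im → ‖z * U z‖ ≤ C₂ := by
    intro z hz0
    rcases eq_or_lt_of_le hz0 with heq | hz
    · have hzr : z = ((z.re : ℝ) : ℂ) := by
        apply Complex.ext <;> simp [← heq]
      rw [hzr]
      exact hC₂ z.re
    · have hy : 0 < z.im := hz
      have hyne : z.im ≠ 0 := ne_of_gt hy
      set c : ℂ := (starRingEnd ℂ) z with hc
      have hcim : c.im = -z.im := by simp [hc]
      have hQ : ∀ x : ℝ, ((‖z - (x : ℂ)‖ ^ 2 : ℝ) : ℂ) = (z - x) * (c - x) := by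
        intro x
        rw [Complex.sq_norm, ← Complex.mul_conj]
        congr 1
        rw [hc, map_sub, Complex.conj_ofReal]
      have hu : ∀ x : ℝ, z - (x : ℂ) ≠ 0 := by
        intro x h
        have := congrArg Complex.im h
        simp at this
        linarith
      have hv : ∀ x : ℝ, c - (x : ℂ) ≠ 0 := by
        intro x h
        have := congrArg Complex.im h
        simp [hc] at this
        linarith
      have hxc : ∀ x : ℝ, (x : ℂ) - c ≠ 0 := by
        intro x h
        apply hv x
        have : c - (x : ℂ) = -((x : ℂ) - c) := by ring
        rw [this, h, neg_zero]
      have hQne : ∀ x : ℝ, ((‖z - (x : ℂ)‖ ^ 2 : ℝ) : ℂ) ≠ 0 := by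
        intro x
        rw [hQ x]
        exact mul_ne_zero (hu x) (hv x)
      have hcontQ : Continuous fun x : ℝ => ((‖z - (x : ℂ)‖ ^ 2 : ℝ) : ℂ) :=
        Complex.continuous_ofReal.comp ((continuous_norm.comp
          (continuous_const.sub Complex.continuous_ofReal)).pow 2)
      have hptb : ∀ x : ℝ, ‖(z.im : ℂ) * (x : ℂ) * U x / ((‖z - (x : ℂ)‖ ^ 2 : ℝ) : ℂ)‖
          ≤ z.im * C₂ * (((x - z.re) ^ 2 + z.im ^ 2)⁻¹) := by
        intro x
        have habs : ‖z - (x : ℂ)‖ ^ 2 = (x - z.re) ^ 2 + z.im ^ 2 := by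
          rw [Complex.sq_norm, Complex.normSq_apply]
          simp [Complex.sub_re, Complex.sub_im]
          ring
        have hpos : 0 < (x - z.re) ^ 2 + z.im ^ 2 := by positivity
        have hn : ‖(z.im : ℂ) * (x : ℂ) * U x / ((‖z - (x : ℂ)‖ ^ 2 : ℝ) : ℂ)‖
            = z.im * (|x| * ‖U (x : ℂ)‖) / ((x - z.re) ^ 2 + z.im ^ 2) := by
          simp only [norm_div, norm_mul, Complex.norm_real, Real.norm_eq_abs]
          rw [_root_.abs_of_pos hy, _root_.abs_of_nonneg (sq_nonneg (‖z - (x : ℂ)‖)), habs]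
          ring
        rw [hn]
        have h1 : z.im * (|x| * ‖U (x : ℂ)‖) ≤ z.im * C₂ :=
          mul_le_mul_of_nonneg_left (hxU x) hy.le
        calc z.im * (|x| * ‖U (x : ℂ)‖) / ((x - z.re) ^ 2 + z.im ^ 2)
            ≤ z.im * C₂ / ((x - z.re) ^ 2 + z.im ^ 2) :=
              div_le_div_of_nonneg_right h1 hpos.le
          _ = z.im * C₂ * (((x - z.re) ^ 2 + z.im ^ 2)⁻¹) := div_eq_mul_inv _ _
      have i1 : Integrable (fun x : ℝ =>
          (z.im : ℂ) * (x : ℂ) * U x / ((‖z - (x : ℂ)‖ ^ 2 : ℝ) : ℂ)) := by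
        refine ((kernel_integrable z.re z.im hyne).const_mul (z.im * C₂)).mono'
          ?_ (Eventually.of_forall hptb)
        exact (((continuous_const.mul Complex.continuous_ofReal).mul hUc).div
          hcontQ hQne).aestronglyMeasurable
      have i2 : Integrable (fun x : ℝ => (-(z.im : ℂ)) * (U x / ((x : ℂ) - c))) :=
        (cauchy_integrable hUc hC₁ hxU (show c.im ≠ 0 by rw [hcim]; exact neg_ne_zero.mpr hyne)).const_mul _
      have hpt : ∀ x : ℝ, z * ((z.im : ℂ) * U x / ((‖z - (x : ℂ)‖ ^ 2 : ℝ) : ℂ))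
          = (z.im : ℂ) * (x : ℂ) * U x / ((‖z - (x : ℂ)‖ ^ 2 : ℝ) : ℂ)
            + (-(z.im : ℂ)) * (U x / ((x : ℂ) - c)) := by
        intro x
        rw [hQ x]
        have e1 : (-(z.im : ℂ)) * (U x / ((x : ℂ) - c)) = (z.im : ℂ) * U x / (c - x) := by
          rw [show ((x : ℂ) - c) = -(c - (x : ℂ)) from by ring, div_neg]
          ring
        rw [e1]
        have e2 : (z.im : ℂ) * U x / (c - x)
            = (z - x) * ((z.im : ℂ) * U x) / ((z - x) * (c - x)) := by
          rw [mul_div_mul_left _ _ (hu x)]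
        rw [e2, ← add_div, ← mul_div_assoc]
        congr 1
        ring
      have key : z * U z = 1 / (Real.pi : ℂ) *
          ∫ x : ℝ, (z.im : ℂ) * (x : ℂ) * U x / ((‖z - (x : ℂ)‖ ^ 2 : ℝ) : ℂ) := by
        have hGz0 : G z = 0 := hG0 z hz
        calc z * U z
            = z * (1 / (Real.pi : ℂ) *
              ∫ x : ℝ, (z.im : ℂ) * U x / ((‖z - (x : ℂ)‖ ^ 2 : ℝ) : ℂ)) := by
              rw [← hPoisson z hz]
          _ = 1 / (Real.pi : ℂ) *
              ∫ x : ℝ, z * ((z.im : ℂ) * U x / ((‖z - (x : ℂ)‖ ^ 2 : ℝ) : ℂ)) := by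
              rw [MeasureTheory.integral_const_mul]
              ring
          _ = 1 / (Real.pi : ℂ) *
              ∫ x : ℝ, ((z.im : ℂ) * (x : ℂ) * U x / ((‖z - (x : ℂ)‖ ^ 2 : ℝ) : ℂ)
                + (-(z.im : ℂ)) * (U x / ((x : ℂ) - c))) := by
              congr 1
              exact integral_congr_ae (Eventually.of_forall hpt)
          _ = 1 / (Real.pi : ℂ) *
              ((∫ x : ℝ, (z.im : ℂ) * (x : ℂ) * U x / ((‖z - (x : ℂ)‖ ^ 2 : ℝ) : ℂ))
                + ∫ x : ℝ, (-(z.im : ℂ)) * (U x / ((x : ℂ) - c))) := by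
              rw [integral_add i1 i2]
          _ = 1 / (Real.pi : ℂ) *
              ∫ x : ℝ, (z.im : ℂ) * (x : ℂ) * U x / ((‖z - (x : ℂ)‖ ^ 2 : ℝ) : ℂ) := by
              rw [MeasureTheory.integral_const_mul]
              have : (∫ x : ℝ, U x / ((x : ℂ) - c)) = G z := by
                simp only [hGdef, hc]
              rw [this, hGz0]
              ring
      rw [key, norm_mul]
      have hnormpi : ‖(1 / (Real.pi : ℂ))‖ = 1 / Real.pi := by
        rw [norm_div, norm_one, Complex.norm_real, Real.norm_eq_abs, abs_of_pos Real.pi_pos]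
      have hIle : ‖∫ x : ℝ, (z.im : ℂ) * (x : ℂ) * U x / ((‖z - (x : ℂ)‖ ^ 2 : ℝ) : ℂ)‖
          ≤ z.im * C₂ * (Real.pi / z.im) := by
        calc ‖∫ x : ℝ, (z.im : ℂ) * (x : ℂ) * U x / ((‖z - (x : ℂ)‖ ^ 2 : ℝ) : ℂ)‖
            ≤ ∫ x : ℝ, z.im * C₂ * (((x - z.re) ^ 2 + z.im ^ 2)⁻¹) :=
              norm_integral_le_of_norm_le
                ((kernel_integrable z.re z.im hyne).const_mul (z.im * C₂))
                (Eventually.of_forall hptb)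
          _ = z.im * C₂ * (Real.pi / z.im) := by
              rw [MeasureTheory.integral_const_mul, kernel_integral z.re z.im hy]
      calc ‖(1 / (Real.pi : ℂ))‖ *
          ‖∫ x : ℝ, (z.im : ℂ) * (x : ℂ) * U x / ((‖z - (x : ℂ)‖ ^ 2 : ℝ) : ℂ)‖
          ≤ (1 / Real.pi) * (z.im * C₂ * (Real.pi / z.im)) := by
            rw [hnormpi]
            exact mul_le_mul_of_nonneg_left hIle (by positivity)
        _ = C₂ := by
            field_simp
  refine ⟨⟨C₂, hbound⟩, ?_⟩
  have hC₂0 : 0 ≤ C₂ := le_trans (norm_nonneg _) (hC₂ 0)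
  apply squeeze_zero_norm' (a := fun ε : ℝ => ε * C₂)
  · filter_upwards [self_mem_nhdsWithin] with ε hε
    have hε0 : 0 < ε := hε
    have hz : Complex.I / (ε : ℂ) = ((ε⁻¹ : ℝ) : ℂ) * Complex.I := by
      rw [div_eq_mul_inv, mul_comm, Complex.ofReal_inv]
    have him : (Complex.I / (ε : ℂ)).im = ε⁻¹ := by
      rw [hz]; simp
    have hnz : ‖Complex.I / (ε : ℂ)‖ = ε⁻¹ := by
      rw [hz, norm_mul, Complex.norm_I, mul_one, Complex.norm_real, Real.norm_eq_abs,
        abs_of_pos (inv_pos.mpr hε0)]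
    have hb := hbound (Complex.I / (ε : ℂ)) (by rw [him]; positivity)
    rw [norm_mul, hnz] at hb
    calc ‖U (Complex.I / (ε : ℂ))‖ = ε * (ε⁻¹ * ‖U (Complex.I / (ε : ℂ))‖) := by
          field_simp
      _ ≤ ε * C₂ := mul_le_mul_of_nonneg_left hb hε0.le
  · have : Tendsto (fun ε : ℝ => ε * C₂) (𝓝 0) (𝓝 (0 * C₂)) :=
      (continuous_id.mul continuous_const).tendsto 0
    rw [zero_mul] at this
    exact this.mono_left nhdsWithin_le_nhds
end

section
/- Let u be a rational function in the Hardy space L²₊(ℝ) whose Hankel operator H_u has finite rank N with Ran(H_u) spanned by {1/(x-p_j)^{l}: 1 ≤ j ≤ k, 1 ≤ l ≤ m_j}. Define T on Ran(H_u) by T(f) = x f - Λ(f)·b_u, where Λ(f) = lim_{x→∞} x f(x) and b_u = ∏_j ((x-conj(p_j))/(x-p_j))^{m_j}. Then every eigenvalue of T equals conj(p_j) for some j; in particular every eigenvalue of T has strictly positive imaginary part. -/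
open MeasureTheory Complex Filter

/-- **Eigenvalues of the infinitesimal shift operator.**  Let `T f = x f - Λ(f) b_u` on
`Ran H_u = span{1/(x-p_j)^l}`, with `b_u` the Blaschke product associated with the poles
`p_j` (all of them in the lower half-plane) with multiplicities `m_j`, and
`Λ(f) = lim_{x→∞} x f(x)`.  If `f ∈ Ran H_u` is a nonzero eigenvector of `T` with
eigenvalue `μ`, then `μ = conj p_j` for some `j`; in particular `Im μ > 0`. -/
theorem stmt_13 (k : ℕ) (p : Fin k → ℂ) (hp : ∀ j, (p j).im < 0) (m : Fin k → ℕ)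
    (a : (j : Fin k) → Fin (m j) → ℂ) (f : ℝ → ℂ)
    (hf : ∀ x : ℝ, f x = ∑ j, ∑ l, a j l / ((x : ℂ) - p j) ^ ((l : ℕ) + 1))
    (hf0 : ∃ x : ℝ, f x ≠ 0)
    (bu : ℝ → ℂ)
    (hbu : ∀ x : ℝ, bu x = ∏ j, (((x : ℂ) - (starRingEnd ℂ) (p j)) / ((x : ℂ) - p j)) ^ (m j))
    (Λ μ : ℂ)
    (hΛ : Tendsto (fun x : ℝ => (x : ℂ) * f x) atTop (nhds Λ))
    (heig : ∀ x : ℝ, (x : ℂ) * f x - Λ * bu x = μ * f x) :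
    (∃ j, μ = (starRingEnd ℂ) (p j)) ∧ 0 < μ.im := by
  have hne : ∀ (x : ℝ) (j : Fin k), ((x : ℂ) - p j) ≠ 0 := by
    intro x j h
    have h2 : ((x : ℂ) - p j).im = 0 := by rw [h]; simp
    simp [Complex.sub_im] at h2
    have := hp j; linarith
  set P' : Polynomial ℂ := ∑ j, ∑ l : Fin (m j), Polynomial.C (a j l) *
      (Polynomial.X - Polynomial.C (p j)) ^ (m j - ((l : ℕ) + 1)) *
      ∏ j' ∈ Finset.univ.erase j, (Polynomial.X - Polynomial.C (p j')) ^ (m j') with hP'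
  have hPf : ∀ x : ℝ, P'.eval (x : ℂ) = f x * ∏ j, ((x : ℂ) - p j) ^ (m j) := by
    intro x
    rw [hf x, Finset.sum_mul, hP']
    simp only [Polynomial.eval_finset_sum, Polynomial.eval_mul, Polynomial.eval_prod,
      Polynomial.eval_pow, Polynomial.eval_sub, Polynomial.eval_X, Polynomial.eval_C]
    refine Finset.sum_congr rfl (fun j _ => ?_)
    rw [Finset.sum_mul]
    refine Finset.sum_congr rfl (fun l _ => ?_)
    have hprod : (∏ j', ((x:ℂ) - p j') ^ (m j')) =
        ((x:ℂ) - p j) ^ (m j) * ∏ j' ∈ Finset.univ.erase j, ((x:ℂ) - p j') ^ (m j') :=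
      (Finset.mul_prod_erase Finset.univ _ (Finset.mem_univ j)).symm
    have hlm : (l : ℕ) + 1 ≤ m j := l.isLt
    have hpow : ((x:ℂ) - p j) ^ (m j) =
        ((x:ℂ) - p j) ^ ((l:ℕ)+1) * ((x:ℂ) - p j) ^ (m j - ((l:ℕ)+1)) := by
      rw [← pow_add, Nat.add_sub_cancel' hlm]
    rw [hprod, hpow]
    have h0 : ((x:ℂ) - p j) ^ ((l:ℕ)+1) ≠ 0 := pow_ne_zero _ (hne x j)
    field_simp
  set Q : Polynomial ℂ := Polynomial.C Λ *
      ∏ j, (Polynomial.X - Polynomial.C ((starRingEnd ℂ) (p j))) ^ (m j) with hQ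
  have hPQ : (Polynomial.X - Polynomial.C μ) * P' = Q := by
    apply Polynomial.eq_of_infinite_eval_eq
    have hinf : (Set.range ((↑) : ℝ → ℂ)).Infinite :=
      Set.infinite_range_of_injective Complex.ofReal_injective
    refine hinf.mono ?_
    rintro _ ⟨x, rfl⟩
    show Polynomial.eval _ _ = Polynomial.eval _ _
    rw [hQ]
    simp only [Polynomial.eval_mul, Polynomial.eval_sub, Polynomial.eval_X, Polynomial.eval_C,
      Polynomial.eval_prod, Polynomial.eval_pow]
    rw [hPf x]
    have he := heig x
    have hxf : ((x:ℂ) - μ) * f x = Λ * bu x := by linear_combination he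
    calc ((x:ℂ) - μ) * (f x * ∏ j, ((x:ℂ) - p j)^(m j))
        = (((x:ℂ)-μ) * f x) * ∏ j, ((x:ℂ)-p j)^(m j) := by ring
      _ = Λ * bu x * ∏ j, ((x:ℂ)-p j)^(m j) := by rw [hxf]
      _ = Λ * ∏ j, ((x:ℂ) - (starRingEnd ℂ) (p j))^(m j) := by
          rw [hbu x, mul_assoc, ← Finset.prod_mul_distrib]
          congr 1
          refine Finset.prod_congr rfl (fun j _ => ?_)
          rw [div_pow, div_mul_cancel₀]
          exact pow_ne_zero _ (hne x j)
  by_cases hΛ0 : Λ = 0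
  · exfalso
    have hQ0 : Q = 0 := by rw [hQ, hΛ0]; simp
    have hP'0 : P' = 0 := by
      rcases mul_eq_zero.1 (hPQ.trans hQ0) with h | h
      · exact absurd h (Polynomial.X_sub_C_ne_zero μ)
      · exact h
    obtain ⟨x, hx⟩ := hf0
    have hBne : (∏ j, ((x:ℂ) - p j)^(m j)) ≠ 0 :=
      Finset.prod_ne_zero_iff.2 (fun j _ => pow_ne_zero _ (hne x j))
    have hfx : f x = 0 := by
      have h := hPf x
      rw [hP'0, Polynomial.eval_zero] at h
      exact (mul_eq_zero.1 h.symm).resolve_right hBne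
    exact hx hfx
  · have hev := congrArg (Polynomial.eval μ) hPQ
    rw [hQ] at hev
    simp only [Polynomial.eval_mul, Polynomial.eval_sub, Polynomial.eval_X, Polynomial.eval_C,
      sub_self, zero_mul, Polynomial.eval_prod, Polynomial.eval_pow] at hev
    have hprod0 : (∏ j, (μ - (starRingEnd ℂ) (p j))^(m j)) = 0 :=
      (mul_eq_zero.1 hev.symm).resolve_left hΛ0
    obtain ⟨j, -, hj⟩ := Finset.prod_eq_zero_iff.1 hprod0
    have hj' : μ = (starRingEnd ℂ) (p j) := by
      have := (pow_eq_zero_iff' ).1 hj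
      exact sub_eq_zero.1 this.1
    refine ⟨⟨j, hj'⟩, ?_⟩
    rw [hj']
    simp only [Complex.conj_im]
    have := hp j; linarith
end
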